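/- arXiv:2512.13068 — 7 statements merged into one kernel-verified Lean document; each statement's English description precedes it below -/
import Mathlib

section
/- Let (Υ_j)_{j≥1} be a nonnegative real sequence with Σ_{j=1}^∞ Υ_j < ∞. Then for every real m > 0, the sum Σ_{v ⊆ ℕ finite} |v|! · m^{|v|} · ∏_{j∈v} Υ_j is finite. -/
open Finset

lemma esymm_bound' (Υ : ℕ+ → ℝ) (hΥ : ∀ j, 0 ≤ Υ j) (s : Finset ℕ+) :
    ∀ k : ℕ, (Nat.factorial k : ℝ) * ∑ w ∈ s.powersetCard k, ∏ j ∈ w, Υ j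
      ≤ (∑ j ∈ s, Υ j) ^ k := by
  have hS : 0 ≤ ∑ j ∈ s, Υ j := Finset.sum_nonneg fun j _ => hΥ j
  intro k
  induction k with
  | zero => simp
  | succ k ih =>
    have key : ((k+1 : ℕ) : ℝ) * ∑ w ∈ s.powersetCard (k+1), ∏ j ∈ w, Υ j
        = ∑ w ∈ s.powersetCard k, ∑ j ∈ s \ w, Υ j * ∏ j' ∈ w, Υ j' := by
      rw [Finset.mul_sum]
      have lhs : ∀ w ∈ s.powersetCard (k+1),
          ((k+1 : ℕ) : ℝ) * ∏ j ∈ w, Υ j = ∑ j ∈ w, Υ j * ∏ j' ∈ w.erase j, Υ j' := by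
        intro w hw
        obtain ⟨hws, hwc⟩ := Finset.mem_powersetCard.1 hw
        rw [Finset.sum_congr rfl fun j hj => (Finset.mul_prod_erase w Υ hj)]
        rw [Finset.sum_const, hwc, nsmul_eq_mul]
      rw [Finset.sum_congr rfl lhs]
      rw [Finset.sum_sigma', Finset.sum_sigma']
      apply Finset.sum_nbij' (fun p => ⟨p.1.erase p.2, p.2⟩) (fun p => ⟨insert p.2 p.1, p.2⟩)
      · rintro ⟨w, j⟩ hp
        simp only [Finset.mem_sigma] at hp ⊢
        obtain ⟨hw, hj⟩ := hp
        obtain ⟨hws, hwc⟩ := Finset.mem_powersetCard.1 hw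
        refine ⟨Finset.mem_powersetCard.2 ⟨(Finset.erase_subset _ _).trans hws, ?_⟩, ?_⟩
        · rw [Finset.card_erase_of_mem hj, hwc]; rfl
        · exact Finset.mem_sdiff.2 ⟨hws hj, Finset.notMem_erase _ _⟩
      · rintro ⟨w, j⟩ hp
        simp only [Finset.mem_sigma] at hp ⊢
        obtain ⟨hw, hj⟩ := hp
        obtain ⟨hws, hwc⟩ := Finset.mem_powersetCard.1 hw
        obtain ⟨hjs, hjw⟩ := Finset.mem_sdiff.1 hj
        refine ⟨Finset.mem_powersetCard.2 ⟨?_, ?_⟩, Finset.mem_insert_self _ _⟩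
        · exact Finset.insert_subset hjs hws
        · rw [Finset.card_insert_of_notMem hjw, hwc]
      · rintro ⟨w, j⟩ hp
        simp only [Finset.mem_sigma] at hp
        exact Sigma.ext (Finset.insert_erase hp.2) (by simp)
      · rintro ⟨w, j⟩ hp
        simp only [Finset.mem_sigma] at hp
        have hjw := (Finset.mem_sdiff.1 hp.2).2
        exact Sigma.ext (Finset.erase_insert hjw) (by simp)
      · rintro ⟨w, j⟩ hp
        rfl
    have step : ∑ w ∈ s.powersetCard k, ∑ j ∈ s \ w, Υ j * ∏ j' ∈ w, Υ j'
        ≤ (∑ j ∈ s, Υ j) * ∑ w ∈ s.powersetCard k, ∏ j ∈ w, Υ j := by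
      rw [Finset.mul_sum]
      apply Finset.sum_le_sum
      intro w hw
      rw [← Finset.sum_mul]
      apply mul_le_mul_of_nonneg_right _ (Finset.prod_nonneg fun j _ => hΥ j)
      exact Finset.sum_le_sum_of_subset_of_nonneg (Finset.sdiff_subset) fun j hj _ => hΥ j
    calc (Nat.factorial (k+1) : ℝ) * ∑ w ∈ s.powersetCard (k+1), ∏ j ∈ w, Υ j
        = (Nat.factorial k : ℝ) * (((k+1 : ℕ):ℝ) * ∑ w ∈ s.powersetCard (k+1), ∏ j ∈ w, Υ j) := by
          rw [Nat.factorial_succ]; push_cast; ring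
      _ = (Nat.factorial k : ℝ) * ∑ w ∈ s.powersetCard k, ∑ j ∈ s \ w, Υ j * ∏ j' ∈ w, Υ j' := by rw [key]
      _ ≤ (Nat.factorial k : ℝ) * ((∑ j ∈ s, Υ j) * ∑ w ∈ s.powersetCard k, ∏ j ∈ w, Υ j) := by
          apply mul_le_mul_of_nonneg_left step (by positivity)
      _ = (∑ j ∈ s, Υ j) * ((Nat.factorial k : ℝ) * ∑ w ∈ s.powersetCard k, ∏ j ∈ w, Υ j) := by ring
      _ ≤ (∑ j ∈ s, Υ j) * (∑ j ∈ s, Υ j) ^ k := mul_le_mul_of_nonneg_left ih hS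
      _ = (∑ j ∈ s, Υ j) ^ (k+1) := by ring

theorem pod_factorial_summable (Υ : ℕ+ → ℝ) (hΥ : ∀ j, 0 ≤ Υ j) (hsum : Summable Υ)
    (m : ℝ) (hm : 0 < m) :
    Summable (fun v : Finset ℕ+ => (Nat.factorial v.card : ℝ) * m ^ v.card * ∏ j ∈ v, Υ j) := by
  classical
  set G : Finset ℕ+ → ℝ := fun w => (Nat.factorial w.card : ℝ) * (2*m) ^ w.card * ∏ j ∈ w, Υ j
    with hG
  have hGnn : ∀ w, 0 ≤ G w := fun w => by
    apply mul_nonneg (mul_nonneg (Nat.cast_nonneg _) (pow_nonneg (by linarith) _))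
    exact Finset.prod_nonneg fun j _ => hΥ j
  -- choose a finite set outside of which the sum is small
  have hball : Metric.ball (0:ℝ) (1/(4*m)) ∈ nhds (0:ℝ) :=
    Metric.ball_mem_nhds _ (by positivity)
  obtain ⟨s₀, hs₀⟩ := hsum.vanishing hball
  have htail : ∀ t : Finset ℕ+, Disjoint t s₀ → 2*m * ∑ j ∈ t, Υ j ≤ 1/2 := by
    intro t ht
    have h1 : ∑ j ∈ t, Υ j < 1/(4*m) := by
      have := hs₀ t ht
      rw [Metric.mem_ball, Real.dist_eq, sub_zero] at this
      exact (le_abs_self _).trans_lt this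
    have h2 : (0:ℝ) < 2*m := by linarith
    calc 2*m * ∑ j ∈ t, Υ j ≤ 2*m * (1/(4*m)) := by
          apply mul_le_mul_of_nonneg_left h1.le h2.le
      _ = 1/2 := by field_simp; ring
  -- geometric bound for sums over subsets of a tail set
  have tailbound : ∀ T : Finset ℕ+, Disjoint T s₀ → ∑ b ∈ T.powerset, G b ≤ 2 := by
    intro T hT
    rw [Finset.sum_powerset]
    have step : ∀ k ∈ Finset.range (T.card + 1),
        ∑ b ∈ T.powersetCard k, G b ≤ (1/2:ℝ)^k := by
      intro k _
      have hcard : ∀ b ∈ T.powersetCard k, G b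
          = (2*m)^k * ((Nat.factorial k : ℝ) * ∏ j ∈ b, Υ j) := by
        intro b hb
        have hbc := (Finset.mem_powersetCard.1 hb).2
        simp only [hG, hbc]
        ring
      rw [Finset.sum_congr rfl hcard, ← Finset.mul_sum, ← Finset.mul_sum]
      have hesymm := esymm_bound' Υ hΥ T k
      have hTnn : (0:ℝ) ≤ ∑ j ∈ T, Υ j := Finset.sum_nonneg fun j _ => hΥ j
      calc (2*m)^k * ((Nat.factorial k:ℝ) * ∑ b ∈ T.powersetCard k, ∏ j ∈ b, Υ j)
          ≤ (2*m)^k * (∑ j ∈ T, Υ j)^k := by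
            apply mul_le_mul_of_nonneg_left hesymm (pow_nonneg (by linarith) _)
        _ = (2*m * ∑ j ∈ T, Υ j)^k := by ring
        _ ≤ (1/2:ℝ)^k := by
            apply pow_le_pow_left₀ (mul_nonneg (by linarith) hTnn) (htail T hT)
    calc ∑ k ∈ Finset.range (T.card + 1), ∑ b ∈ T.powersetCard k, G b
        ≤ ∑ k ∈ Finset.range (T.card + 1), (1/2:ℝ)^k := Finset.sum_le_sum step
      _ ≤ ∑' k : ℕ, (1/2:ℝ)^k := Summable.sum_le_tsum _ (fun i _ => by positivity)
          (summable_geometric_of_lt_one (by norm_num) (by norm_num))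
      _ = 2 := by rw [tsum_geometric_of_lt_one (by norm_num) (by norm_num)]; norm_num
  set Cg : ℝ := ∑ a ∈ s₀.powerset, G a with hCg
  have hCgnn : 0 ≤ Cg := Finset.sum_nonneg fun a _ => hGnn a
  apply summable_of_sum_le (c := Cg * 2)
  · intro v
    apply mul_nonneg (mul_nonneg (Nat.cast_nonneg _) (pow_nonneg hm.le _))
    exact Finset.prod_nonneg fun j _ => hΥ j
  · intro u
    -- termwise splitting bound
    have split : ∀ v : Finset ℕ+,
        (Nat.factorial v.card : ℝ) * m ^ v.card * ∏ j ∈ v, Υ j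
          ≤ G (v ∩ s₀) * G (v \ s₀) := by
      intro v
      set a := (v ∩ s₀).card
      set b := (v \ s₀).card
      have hab : a + b = v.card := Finset.card_inter_add_card_sdiff v s₀
      have hprod : (∏ j ∈ v ∩ s₀, Υ j) * ∏ j ∈ v \ s₀, Υ j = ∏ j ∈ v, Υ j :=
        Finset.prod_inter_mul_prod_diff v s₀ Υ
      have hfact : ((a+b).factorial : ℝ) ≤ 2^(a+b) * (a.factorial * b.factorial) := by
        have h1 : (a+b).factorial = (a+b).choose a * a.factorial * b.factorial := by
          have := Nat.choose_mul_factorial_mul_factorial (Nat.le_add_right a b)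
          simpa using this.symm
        have h2 : (a+b).choose a ≤ 2^(a+b) := by
          calc (a+b).choose a ≤ ∑ i ∈ Finset.range (a+b+1), (a+b).choose i :=
                Finset.single_le_sum (fun i _ => Nat.zero_le _)
                  (Finset.mem_range.2 (Nat.lt_succ_of_le (Nat.le_add_right a b)))
            _ = 2^(a+b) := Nat.sum_range_choose (a+b)
        calc ((a+b).factorial : ℝ) = ((a+b).choose a : ℝ) * a.factorial * b.factorial := by
              rw [h1]; push_cast; ring
          _ ≤ (2^(a+b) : ℝ) * a.factorial * b.factorial := by
              apply mul_le_mul_of_nonneg_right _ (Nat.cast_nonneg _)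
              apply mul_le_mul_of_nonneg_right _ (Nat.cast_nonneg _)
              exact_mod_cast h2
          _ = 2^(a+b) * (a.factorial * b.factorial) := by ring
      have hP1 : (0:ℝ) ≤ ∏ j ∈ v ∩ s₀, Υ j := Finset.prod_nonneg fun j _ => hΥ j
      have hP2 : (0:ℝ) ≤ ∏ j ∈ v \ s₀, Υ j := Finset.prod_nonneg fun j _ => hΥ j
      rw [hG]
      calc (Nat.factorial v.card : ℝ) * m ^ v.card * ∏ j ∈ v, Υ j
          = ((a+b).factorial : ℝ) * (m^a * m^b * ((∏ j ∈ v ∩ s₀, Υ j) * ∏ j ∈ v \ s₀, Υ j)) := by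
            rw [← hab, ← hprod, pow_add]; ring
        _ ≤ (2^(a+b) * ((a.factorial:ℝ) * b.factorial))
              * (m^a * m^b * ((∏ j ∈ v ∩ s₀, Υ j) * ∏ j ∈ v \ s₀, Υ j)) := by
            apply mul_le_mul_of_nonneg_right hfact
            positivity
        _ = ((a.factorial:ℝ) * (2*m)^a * ∏ j ∈ v ∩ s₀, Υ j)
              * ((b.factorial:ℝ) * (2*m)^b * ∏ j ∈ v \ s₀, Υ j) := by
            rw [pow_add, mul_pow, mul_pow]; ring
    set T : Finset ℕ+ := u.sup id \ s₀ with hT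
    have hTd : Disjoint T s₀ := Finset.sdiff_disjoint
    have hinj : ∀ x ∈ u, ∀ y ∈ u,
        (fun v : Finset ℕ+ => (v ∩ s₀, v \ s₀)) x = (fun v => (v ∩ s₀, v \ s₀)) y → x = y := by
      intro x _ y _ hxy
      simp only [Prod.mk.injEq] at hxy
      have h1 : x ∩ s₀ ∪ x \ s₀ = x := sup_inf_sdiff x s₀
      have h2 : y ∩ s₀ ∪ y \ s₀ = y := sup_inf_sdiff y s₀
      rw [← h1, ← h2, hxy.1, hxy.2]
    calc ∑ v ∈ u, (Nat.factorial v.card : ℝ) * m ^ v.card * ∏ j ∈ v, Υ j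
        ≤ ∑ v ∈ u, G (v ∩ s₀) * G (v \ s₀) := Finset.sum_le_sum fun v _ => split v
      _ = ∑ p ∈ u.image (fun v => (v ∩ s₀, v \ s₀)), G p.1 * G p.2 := by
          rw [Finset.sum_image hinj]
      _ ≤ ∑ p ∈ s₀.powerset ×ˢ T.powerset, G p.1 * G p.2 := by
          apply Finset.sum_le_sum_of_subset_of_nonneg
          · intro p hp
            obtain ⟨v, hv, rfl⟩ := Finset.mem_image.1 hp
            rw [Finset.mem_product]
            constructor
            · exact Finset.mem_powerset.2 Finset.inter_subset_right
            · rw [Finset.mem_powerset, hT]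
              exact Finset.sdiff_subset_sdiff (Finset.le_sup (f := id) hv) le_rfl
          · intro p _ _
            exact mul_nonneg (hGnn _) (hGnn _)
      _ = Cg * ∑ b ∈ T.powerset, G b := by
          rw [Finset.sum_product, hCg, Finset.sum_mul_sum]
      _ ≤ Cg * 2 := mul_le_mul_of_nonneg_left (tailbound T hTd) hCgnn
end

section
/- Let (Υ_j)_{j≥1} be a nonnegative summable sequence. Then the ℓ-th root of ∏_{J=1}^{ℓ} max(J·Υ_J, Σ_{j=J+1}^∞ Υ_j) tends to 0 as ℓ → ∞. In particular this ℓ-th root is bounded above by (1/ℓ)Σ_{J=1}^ℓ J·Υ_J + (1/ℓ)Σ_{J=1}^ℓ Σ_{j=J+1}^∞ Υ_j, and both averages converge to 0. -/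
open Filter Finset

private lemma succPNat_tendsto : Tendsto Nat.succPNat atTop atTop := by
  apply tendsto_atTop_atTop.2
  intro b
  refine ⟨(b : ℕ), fun a ha => ?_⟩
  rw [← PNat.coe_le_coe, Nat.succPNat_coe]
  omega

private lemma pnat_coe_tendsto : Tendsto (fun n : ℕ+ => (n : ℕ)) atTop atTop := by
  apply tendsto_atTop_atTop.2
  intro b
  refine ⟨b.succPNat, fun a ha => ?_⟩
  have := (PNat.coe_le_coe _ _).2 ha
  rw [Nat.succPNat_coe] at this
  omega

private lemma cesaro_pnat {u : ℕ+ → ℝ} (h : Tendsto u atTop (nhds 0)) :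
    Tendsto (fun ℓ : ℕ+ => (1 / (ℓ : ℝ)) * ∑ J ∈ Finset.Icc 1 ℓ, u J) atTop (nhds 0) := by
  have hv : Tendsto (fun n : ℕ => u n.succPNat) atTop (nhds 0) := h.comp succPNat_tendsto
  have hcomp := hv.cesaro.comp pnat_coe_tendsto
  have heq : (fun ℓ : ℕ+ => (1 / (ℓ : ℝ)) * ∑ J ∈ Finset.Icc 1 ℓ, u J)
      = (fun n : ℕ => ((n : ℝ)⁻¹ * ∑ i ∈ Finset.range n, u i.succPNat)) ∘
        (fun n : ℕ+ => (n : ℕ)) := by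
    funext ℓ
    simp only [Function.comp, one_div]
    congr 1
    refine Finset.sum_nbij' (fun J => (J : ℕ) - 1) (fun i => i.succPNat) ?_ ?_ ?_ ?_ ?_
    · intro J hJ
      simp only [Finset.mem_Icc] at hJ
      have h1 := J.one_le
      rw [← PNat.coe_le_coe] at h1
      have h2 := (PNat.coe_le_coe _ _).2 hJ.2
      simp only [PNat.one_coe] at h1
      simp only [Finset.mem_range]
      omega
    · intro i hi
      simp only [Finset.mem_range] at hi
      simp only [Finset.mem_Icc]
      refine ⟨i.succPNat.one_le, ?_⟩
      rw [← PNat.coe_le_coe, Nat.succPNat_coe]; omega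
    · intro J hJ
      have h1 := J.one_le
      rw [← PNat.coe_le_coe] at h1
      simp only [PNat.one_coe] at h1
      apply PNat.coe_injective
      simp only [Nat.succPNat_coe]
      omega
    · intro i _
      simp [Nat.succPNat_coe]
    · intro J hJ
      have h1 := J.one_le
      rw [← PNat.coe_le_coe] at h1
      simp only [PNat.one_coe] at h1
      congr 1
      apply PNat.coe_injective
      simp only [Nat.succPNat_coe]
      omega
  rw [heq]
  exact hcomp

private lemma tail_summable {Υ : ℕ+ → ℝ} (hΥ : ∀ j, 0 ≤ Υ j) (hsum : Summable Υ) (J : ℕ+) :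
    Summable (fun j : ℕ+ => if J < j then Υ j else 0) :=
  hsum.of_nonneg_of_le (fun j => by by_cases h : J < j <;> simp [h, hΥ j])
    (fun j => by by_cases h : J < j <;> simp [h, hΥ j])

private lemma head_summable {Υ : ℕ+ → ℝ} (hΥ : ∀ j, 0 ≤ Υ j) (hsum : Summable Υ) (J : ℕ+) :
    Summable (fun j : ℕ+ => if j ≤ J then Υ j else 0) :=
  hsum.of_nonneg_of_le (fun j => by by_cases h : j ≤ J <;> simp [h, hΥ j])
    (fun j => by by_cases h : j ≤ J <;> simp [h, hΥ j])

private lemma tail_eq {Υ : ℕ+ → ℝ} (hΥ : ∀ j, 0 ≤ Υ j) (hsum : Summable Υ) (J : ℕ+) :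
    (∑' j : ℕ+, if J < j then Υ j else 0) = (∑' j, Υ j) - ∑ j ∈ Finset.Icc 1 J, Υ j := by
  have hs : (∑' j : ℕ+, if j ≤ J then Υ j else 0) = ∑ j ∈ Finset.Icc 1 J, Υ j := by
    rw [tsum_eq_sum (s := Finset.Icc 1 J)
      (fun b hb => if_neg (fun hle => hb (Finset.mem_Icc.2 ⟨b.one_le, hle⟩)))]
    exact Finset.sum_congr rfl fun j hj => if_pos (Finset.mem_Icc.1 hj).2
  have hT : (∑' j, Υ j)
      = ∑' j : ℕ+, ((if j ≤ J then Υ j else 0) + (if J < j then Υ j else 0)) :=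
    tsum_congr fun j => by
      by_cases h : j ≤ J
      · simp [h, not_lt.2 h]
      · simp [h, not_le.1 h]
  rw [hT, Summable.tsum_add (head_summable hΥ hsum J) (tail_summable hΥ hsum J), hs]
  ring

private lemma tail_tendsto {Υ : ℕ+ → ℝ} (hΥ : ∀ j, 0 ≤ Υ j) (hsum : Summable Υ) :
    Tendsto (fun J : ℕ+ => ∑' j : ℕ+, if J < j then Υ j else 0) atTop (nhds 0) := by
  have hmap : Tendsto (fun J : ℕ+ => Finset.Icc 1 J) atTop atTop := by
    apply tendsto_atTop_atTop.2
    intro s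
    refine ⟨s.sup id ⊔ 1, fun a ha x hx => Finset.mem_Icc.2 ⟨x.one_le, ?_⟩⟩
    exact le_trans (le_trans (Finset.le_sup (f := id) hx) le_sup_left) ha
  have hpartial : Tendsto (fun J : ℕ+ => ∑ j ∈ Finset.Icc 1 J, Υ j) atTop
      (nhds (∑' j, Υ j)) := hsum.hasSum.comp hmap
  have hfin := (tendsto_const_nhds (x := ∑' j, Υ j) (f := atTop (α := ℕ+))).sub hpartial
  rw [sub_self] at hfin
  have : (fun J : ℕ+ => ∑' j : ℕ+, if J < j then Υ j else 0)
      = fun J : ℕ+ => (∑' j, Υ j) - ∑ j ∈ Finset.Icc 1 J, Υ j := by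
    funext J; exact tail_eq hΥ hsum J
  rw [this]
  exact hfin

private lemma swap_bound {Υ : ℕ+ → ℝ} (hΥ : ∀ j, 0 ≤ Υ j) (hsum : Summable Υ) (ℓ : ℕ+) :
    ∑ J ∈ Finset.Icc 1 ℓ, (J : ℝ) * Υ J
      ≤ ∑ k ∈ Finset.Icc 1 ℓ, (Υ k + ∑' j : ℕ+, if k < j then Υ j else 0) := by
  have hrw : ∀ J ∈ Finset.Icc 1 ℓ, (J : ℝ) * Υ J = ∑ k ∈ Finset.Icc 1 J, Υ J := by
    intro J _
    rw [Finset.sum_const, nsmul_eq_mul, PNat.card_Icc]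
    simp only [PNat.one_coe, Nat.add_sub_cancel]
  rw [Finset.sum_congr rfl hrw,
    Finset.sum_comm' (s' := fun k => Finset.Icc k ℓ) (t' := Finset.Icc 1 ℓ)
      (fun J k => by
        simp only [Finset.mem_Icc, ← PNat.coe_le_coe, PNat.one_coe]
        omega)]
  apply Finset.sum_le_sum
  intro k hk
  rw [Finset.Icc_eq_cons_Ioc (Finset.mem_Icc.1 hk).2, Finset.sum_cons]
  apply add_le_add_right
  calc ∑ J ∈ Finset.Ioc k ℓ, Υ J
      = ∑ J ∈ Finset.Ioc k ℓ, (if k < J then Υ J else 0) :=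
        Finset.sum_congr rfl fun J hJ => (if_pos (Finset.mem_Ioc.1 hJ).1).symm
    _ ≤ _ := Summable.sum_le_tsum _ (fun j _ => by by_cases h : k < j <;> simp [h, hΥ j])
        (tail_summable hΥ hsum k)
theorem geom_mean_max_tendsto_zero (Υ : ℕ+ → ℝ) (hΥ : ∀ j, 0 ≤ Υ j) (hsum : Summable Υ) :
    Tendsto (fun ℓ : ℕ+ =>
        (∏ J ∈ Finset.Icc 1 ℓ,
            max ((J : ℝ) * Υ J) (∑' j : ℕ+, if J < j then Υ j else 0)) ^ ((1 : ℝ) / (ℓ : ℝ)))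
      atTop (nhds 0) ∧
    (∀ ℓ : ℕ+,
      (∏ J ∈ Finset.Icc 1 ℓ,
          max ((J : ℝ) * Υ J) (∑' j : ℕ+, if J < j then Υ j else 0)) ^ ((1 : ℝ) / (ℓ : ℝ))
        ≤ (1 / (ℓ : ℝ)) * ∑ J ∈ Finset.Icc 1 ℓ, (J : ℝ) * Υ J
          + (1 / (ℓ : ℝ)) * ∑ J ∈ Finset.Icc 1 ℓ, ∑' j : ℕ+, if J < j then Υ j else 0) ∧
    Tendsto (fun ℓ : ℕ+ => (1 / (ℓ : ℝ)) * ∑ J ∈ Finset.Icc 1 ℓ, (J : ℝ) * Υ J)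
      atTop (nhds 0) ∧
    Tendsto (fun ℓ : ℕ+ =>
        (1 / (ℓ : ℝ)) * ∑ J ∈ Finset.Icc 1 ℓ, ∑' j : ℕ+, if J < j then Υ j else 0)
      atTop (nhds 0) := by
  have hpos : ∀ ℓ : ℕ+, (0:ℝ) < (ℓ:ℝ) := fun ℓ => by exact_mod_cast ℓ.pos
  have hS := tail_tendsto hΥ hsum
  have h4 := cesaro_pnat hS
  haveI : NoMaxOrder ℕ+ := ⟨fun a => ⟨a + 1, by
    rw [← PNat.coe_lt_coe, PNat.add_coe, PNat.one_coe]; omega⟩⟩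
  have hΥ0 : Tendsto Υ atTop (nhds 0) :=
    hsum.tendsto_cofinite_zero.mono_left Filter.atTop_le_cofinite
  have hupper0 : Tendsto (fun ℓ : ℕ+ => (1 / (ℓ:ℝ)) * ∑ k ∈ Finset.Icc 1 ℓ,
      (Υ k + ∑' j : ℕ+, if k < j then Υ j else 0)) atTop (nhds 0) :=
    cesaro_pnat (u := fun k => Υ k + ∑' j : ℕ+, if k < j then Υ j else 0)
      (by simpa using hΥ0.add hS)
  have h3 : Tendsto (fun ℓ : ℕ+ => (1 / (ℓ:ℝ)) * ∑ J ∈ Finset.Icc 1 ℓ, (J:ℝ) * Υ J)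
      atTop (nhds 0) := by
    apply tendsto_of_tendsto_of_tendsto_of_le_of_le tendsto_const_nhds hupper0
    · intro ℓ
      apply mul_nonneg (one_div_nonneg.2 (hpos ℓ).le)
      exact Finset.sum_nonneg fun J _ => mul_nonneg (hpos J).le (hΥ J)
    · intro ℓ
      exact mul_le_mul_of_nonneg_left (swap_bound hΥ hsum ℓ) (one_div_nonneg.2 (hpos ℓ).le)
  have h2 : ∀ ℓ : ℕ+,
      (∏ J ∈ Finset.Icc 1 ℓ,
          max ((J : ℝ) * Υ J) (∑' j : ℕ+, if J < j then Υ j else 0)) ^ ((1 : ℝ) / (ℓ : ℝ))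
        ≤ (1 / (ℓ : ℝ)) * ∑ J ∈ Finset.Icc 1 ℓ, (J : ℝ) * Υ J
          + (1 / (ℓ : ℝ)) * ∑ J ∈ Finset.Icc 1 ℓ, ∑' j : ℕ+, if J < j then Υ j else 0 := by
    intro ℓ
    set z : ℕ+ → ℝ := fun J => max ((J:ℝ) * Υ J) (∑' j : ℕ+, if J < j then Υ j else 0) with hzdef
    have hznn : ∀ J ∈ Finset.Icc 1 ℓ, 0 ≤ z J := fun J _ =>
      le_max_of_le_left (mul_nonneg (hpos J).le (hΥ J))
    have hw : ∑ _J ∈ Finset.Icc 1 ℓ, (1 / (ℓ:ℝ)) = 1 := by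
      rw [Finset.sum_const, PNat.card_Icc]
      simp only [PNat.one_coe, Nat.add_sub_cancel, nsmul_eq_mul]
      have : ((ℓ:ℕ):ℝ) = (ℓ:ℝ) := by norm_cast
      rw [this]
      field_simp
    have hgm := Real.geom_mean_le_arith_mean_weighted (Finset.Icc 1 ℓ)
      (fun _ => 1 / (ℓ:ℝ)) z (fun _ _ => one_div_nonneg.2 (hpos ℓ).le) hw hznn
    rw [Real.finset_prod_rpow _ _ hznn] at hgm
    calc (∏ J ∈ Finset.Icc 1 ℓ, z J) ^ ((1:ℝ)/(ℓ:ℝ))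
        ≤ ∑ J ∈ Finset.Icc 1 ℓ, (1/(ℓ:ℝ)) * z J := hgm
      _ = (1/(ℓ:ℝ)) * ∑ J ∈ Finset.Icc 1 ℓ, z J := by rw [← Finset.mul_sum]
      _ ≤ (1/(ℓ:ℝ)) * ∑ J ∈ Finset.Icc 1 ℓ,
            ((J:ℝ) * Υ J + ∑' j : ℕ+, if J < j then Υ j else 0) := by
          apply mul_le_mul_of_nonneg_left _ (one_div_nonneg.2 (hpos ℓ).le)
          apply Finset.sum_le_sum
          intro J _
          exact max_le
            (le_add_of_nonneg_right (tsum_nonneg fun j => by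
              by_cases h : J < j <;> simp [h, hΥ j]))
            (le_add_of_nonneg_left (mul_nonneg (hpos J).le (hΥ J)))
      _ = _ := by rw [Finset.sum_add_distrib, mul_add]
  refine ⟨?_, h2, h3, h4⟩
  have hsumT := h3.add h4
  rw [add_zero] at hsumT
  apply tendsto_of_tendsto_of_tendsto_of_le_of_le tendsto_const_nhds hsumT
  · intro ℓ
    apply Real.rpow_nonneg
    exact Finset.prod_nonneg fun J _ =>
      le_max_of_le_left (mul_nonneg (hpos J).le (hΥ J))
  · exact h2
end

section
/- For every real θ > 0, lim_{m→∞} m^{-1/θ} · log( Σ_{ℓ=0}^∞ m^ℓ/(ℓ!)^θ ) = θ. -/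
open Filter Real

private lemma aux_ratio {θ : ℝ} (hθ : 0 < θ) {m : ℝ} (hm : 0 ≤ m) {n : ℕ}
    (hn : ⌈(2*m)^(1/θ)⌉₊ ≤ n) :
    m ^ (n+1) / (Nat.factorial (n+1) : ℝ) ^ θ ≤ (1/2) * (m ^ n / (Nat.factorial n : ℝ) ^ θ) := by
  have hfact1 : (0:ℝ) < ((n:ℝ)+1) ^ θ := by positivity
  have hkey : m ^ (n+1) / (Nat.factorial (n+1) : ℝ) ^ θ
      = (m / ((n:ℝ)+1) ^ θ) * (m ^ n / (Nat.factorial n : ℝ) ^ θ) := by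
    rw [Nat.factorial_succ, Nat.cast_mul, Real.mul_rpow (by positivity) (by positivity),
      pow_succ]
    push_cast
    field_simp
  have h2m : 2 * m ≤ ((n:ℝ)+1) ^ θ := by
    have hy : (2*m)^(1/θ) ≤ (n:ℝ)+1 := by
      have h1 := Nat.le_ceil ((2*m)^(1/θ))
      have hn' : (⌈(2*m)^(1/θ)⌉₊ : ℝ) ≤ (n:ℝ) := by exact_mod_cast hn
      linarith
    calc 2*m = ((2*m)^(1/θ))^θ := by
          rw [← Real.rpow_mul (by positivity), one_div, inv_mul_cancel₀ hθ.ne', Real.rpow_one]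
      _ ≤ ((n:ℝ)+1) ^ θ := Real.rpow_le_rpow (by positivity) hy hθ.le
  have hratio : m / ((n:ℝ)+1) ^ θ ≤ 1/2 := by
    rw [div_le_iff₀ hfact1]; linarith
  rw [hkey]
  exact mul_le_mul_of_nonneg_right hratio (by positivity)

private lemma aux_summable {θ : ℝ} (hθ : 0 < θ) {m : ℝ} (hm : 0 ≤ m) :
    Summable (fun ℓ : ℕ => m ^ ℓ / (Nat.factorial ℓ : ℝ) ^ θ) := by
  apply summable_of_ratio_norm_eventually_le (r := 1/2) (by norm_num)
  filter_upwards [eventually_ge_atTop ⌈(2*m)^(1/θ)⌉₊] with n hn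
  rw [Real.norm_of_nonneg (by positivity), Real.norm_of_nonneg (by positivity)]
  exact aux_ratio hθ hm hn

private lemma aux_log_term {θ : ℝ} {m : ℝ} (hm : 0 < m) (L : ℕ) :
    Real.log (m ^ L / (Nat.factorial L : ℝ) ^ θ)
      = (L:ℝ) * Real.log m - θ * Real.log (Nat.factorial L) := by
  rw [Real.log_div (pow_ne_zero _ hm.ne') (by positivity), Real.log_pow,
    Real.log_rpow (by positivity)]

private lemma aux_log_factorial_lb {ℓ : ℕ} (h1 : 1 ≤ ℓ) :
    (ℓ:ℝ) * Real.log ℓ - ℓ ≤ Real.log (Nat.factorial ℓ) := by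
  have h0 : (0:ℝ) < ℓ := by exact_mod_cast h1
  have h := Real.pow_div_factorial_le_exp (x := (ℓ:ℝ)) h0.le ℓ
  have hf : (0:ℝ) < (Nat.factorial ℓ : ℝ) := by positivity
  have h2 : (ℓ:ℝ)^ℓ ≤ Real.exp ℓ * Nat.factorial ℓ := by
    rw [div_le_iff₀ hf] at h; linarith
  have h3 := Real.log_le_log (by positivity) h2
  rw [Real.log_pow, Real.log_mul (Real.exp_ne_zero _) hf.ne', Real.log_exp] at h3
  linarith

private lemma aux_stirling : ∀ᶠ n : ℕ in atTop, Real.log (Nat.factorial n)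
    ≤ Real.log 2 + (1/2) * Real.log (2*(n:ℝ)) + (n:ℝ) * (Real.log n - 1) := by
  have hlt : Real.sqrt Real.pi < 2 := by
    rw [show (2:ℝ) = Real.sqrt 4 by
      rw [show (4:ℝ) = 2^2 by norm_num, Real.sqrt_sq]; norm_num]
    exact Real.sqrt_lt_sqrt Real.pi_nonneg (by nlinarith [Real.pi_lt_d2])
  have hev : ∀ᶠ n : ℕ in atTop, Stirling.stirlingSeq n ≤ 2 :=
    Stirling.tendsto_stirlingSeq_sqrt_pi.eventually (eventually_le_nhds hlt)
  filter_upwards [hev, eventually_ge_atTop 1] with n hs hn1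
  have hn0 : (0:ℝ) < (n:ℝ) := by exact_mod_cast hn1
  have hD : (0:ℝ) < Real.sqrt (2*(n:ℝ)) * ((n:ℝ)/Real.exp 1)^n := by positivity
  have hfle : (Nat.factorial n : ℝ) ≤ 2 * (Real.sqrt (2*(n:ℝ)) * ((n:ℝ)/Real.exp 1)^n) := by
    have hdef : Stirling.stirlingSeq n
        = (Nat.factorial n : ℝ) / (Real.sqrt (2*(n:ℝ)) * ((n:ℝ)/Real.exp 1)^n) := rfl
    rw [hdef, div_le_iff₀ hD] at hs; linarith
  have h3 := Real.log_le_log (by positivity) hfle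
  rw [Real.log_mul (by norm_num) hD.ne', Real.log_mul (by positivity) (by positivity),
    Real.log_sqrt (by positivity), Real.log_pow, Real.log_div hn0.ne' (Real.exp_ne_zero _),
    Real.log_exp] at h3
  linarith

private lemma aux_term_le_exp {θ : ℝ} (hθ : 0 < θ) {m : ℝ} (hm : 1 ≤ m) (ℓ : ℕ) :
    m ^ ℓ / (Nat.factorial ℓ : ℝ) ^ θ ≤ Real.exp (θ * m ^ (1/θ)) := by
  have hm0 : (0:ℝ) < m := lt_of_lt_of_le one_pos hm
  have hx1 : (1:ℝ) ≤ m ^ (1/θ) := Real.one_le_rpow hm (by positivity)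
  have hx0 : (0:ℝ) < m ^ (1/θ) := lt_of_lt_of_le one_pos hx1
  rcases Nat.eq_zero_or_pos ℓ with h0 | h1
  · subst h0
    simp only [pow_zero, Nat.factorial_zero, Nat.cast_one, Real.one_rpow, div_one]
    exact Real.one_le_exp (by positivity)
  · have hl0 : (0:ℝ) < ℓ := by exact_mod_cast h1
    have hterm : (0:ℝ) < m ^ ℓ / (Nat.factorial ℓ : ℝ) ^ θ := by positivity
    rw [← Real.exp_log hterm]
    apply Real.exp_le_exp.2
    rw [aux_log_term hm0]
    have hlf := aux_log_factorial_lb h1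
    have hlogm : Real.log m = θ * Real.log (m ^ (1/θ)) := by
      rw [Real.log_rpow hm0]; field_simp
    have hkey : (ℓ:ℝ) * (Real.log (m^(1/θ)) - Real.log ℓ) ≤ m^(1/θ) - ℓ := by
      have hdiv : (0:ℝ) < m^(1/θ) / ℓ := by positivity
      have h := Real.log_le_sub_one_of_pos hdiv
      rw [Real.log_div hx0.ne' hl0.ne'] at h
      have := mul_le_mul_of_nonneg_left h hl0.le
      have heq : (ℓ:ℝ) * (m^(1/θ)/ℓ - 1) = m^(1/θ) - ℓ := by field_simp
      linarith [heq ▸ this]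
    rw [hlogm]
    have p1 : θ * ((ℓ:ℝ) * Real.log ℓ - ℓ) ≤ θ * Real.log (Nat.factorial ℓ) :=
      mul_le_mul_of_nonneg_left hlf hθ.le
    have p2 : θ * ((ℓ:ℝ) * (Real.log (m^(1/θ)) - Real.log ℓ)) ≤ θ * (m^(1/θ) - ℓ) :=
      mul_le_mul_of_nonneg_left hkey hθ.le
    nlinarith [p1, p2]

private lemma aux_tsum_upper {θ : ℝ} (hθ : 0 < θ) {m : ℝ} (hm : 1 ≤ m) :
    (∑' ℓ : ℕ, m ^ ℓ / (Nat.factorial ℓ : ℝ) ^ θ)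
      ≤ ((⌈(2*m)^(1/θ)⌉₊ : ℝ) + 2) * Real.exp (θ * m ^ (1/θ)) := by
  have hm0 : (0:ℝ) < m := lt_of_lt_of_le one_pos hm
  set N := ⌈(2*m)^(1/θ)⌉₊ with hN
  set f : ℕ → ℝ := fun ℓ => m ^ ℓ / (Nat.factorial ℓ : ℝ) ^ θ with hf
  have hsum : Summable f := aux_summable hθ hm0.le
  have hterm : ∀ ℓ, f ℓ ≤ Real.exp (θ * m ^ (1/θ)) := aux_term_le_exp hθ hm
  have hgeom : ∀ j : ℕ, f (j + N) ≤ (1/2:ℝ)^j * f N := by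
    intro j
    induction j with
    | zero => simp
    | succ j ih =>
      have hstep : f (j + N + 1) ≤ (1/2) * f (j + N) :=
        aux_ratio hθ hm0.le (Nat.le_add_left N j)
      have hnn : (0:ℝ) ≤ (1/2:ℝ) := by norm_num
      calc f (j + 1 + N) = f (j + N + 1) := by congr 1; omega
        _ ≤ (1/2) * f (j + N) := hstep
        _ ≤ (1/2) * ((1/2:ℝ)^j * f N) := mul_le_mul_of_nonneg_left ih hnn
        _ = (1/2:ℝ)^(j+1) * f N := by ring
  have htail_sum : Summable (fun j : ℕ => f (j + N)) := (summable_nat_add_iff N).2 hsum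
  have htail : (∑' j : ℕ, f (j + N)) ≤ 2 * f N := by
    calc (∑' j : ℕ, f (j + N)) ≤ ∑' j : ℕ, (1/2:ℝ)^j * f N :=
          Summable.tsum_le_tsum hgeom htail_sum (summable_geometric_two.mul_right _)
      _ = 2 * f N := by rw [tsum_mul_right, tsum_geometric_two]
  have hhead : (∑ i ∈ Finset.range N, f i) ≤ (N:ℝ) * Real.exp (θ * m ^ (1/θ)) := by
    calc (∑ i ∈ Finset.range N, f i) ≤ ∑ _i ∈ Finset.range N, Real.exp (θ * m ^ (1/θ)) :=
          Finset.sum_le_sum (fun i _ => hterm i)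
      _ = (N:ℝ) * Real.exp (θ * m ^ (1/θ)) := by
          rw [Finset.sum_const, Finset.card_range, nsmul_eq_mul]
  have hsplit := Summable.sum_add_tsum_nat_add (f := f) N hsum
  have hfN : f N ≤ Real.exp (θ * m ^ (1/θ)) := hterm N
  calc (∑' ℓ : ℕ, f ℓ) = (∑ i ∈ Finset.range N, f i) + ∑' j : ℕ, f (j + N) := hsplit.symm
    _ ≤ (N:ℝ) * Real.exp (θ * m ^ (1/θ)) + 2 * f N := add_le_add hhead htail
    _ ≤ (N:ℝ) * Real.exp (θ * m ^ (1/θ)) + 2 * Real.exp (θ * m ^ (1/θ)) := by linarith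
    _ = ((N:ℝ) + 2) * Real.exp (θ * m ^ (1/θ)) := by ring

private lemma aux_phi_tendsto {θ : ℝ} (hθ : 0 < θ) :
    Tendsto (fun x : ℝ => x⁻¹ * ((⌊x⌋₊:ℝ) * (θ * Real.log x)
      - θ * Real.log (Nat.factorial ⌊x⌋₊))) atTop (nhds θ) := by
  have hlogdiv : Tendsto (fun x : ℝ => Real.log x / x) atTop (nhds 0) :=
    Real.isLittleO_log_id_atTop.tendsto_div_nhds_zero
  -- lower bound function ψ
  have hψ : Tendsto (fun x : ℝ => θ * ((⌊x⌋₊:ℝ)/x)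
      - θ * (((3/2)*Real.log 2 + (1/2)*Real.log x) / x)) atTop (nhds θ) := by
    have h1 : Tendsto (fun x : ℝ => (⌊x⌋₊:ℝ)/x) atTop (nhds 1) := tendsto_nat_floor_div_atTop
    have h2 : Tendsto (fun x : ℝ => ((3/2)*Real.log 2 + (1/2)*Real.log x)/x)
        atTop (nhds 0) := by
      have h2a : Tendsto (fun x : ℝ => ((3/2)*Real.log 2) * x⁻¹ + (1/2)*(Real.log x / x))
          atTop (nhds (((3/2)*Real.log 2) * 0 + (1/2)*0)) :=
        (tendsto_const_nhds.mul tendsto_inv_atTop_zero).add (hlogdiv.const_mul _)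
      simp only [mul_zero, add_zero] at h2a
      refine h2a.congr (fun x => by ring)
    have := (h1.const_mul θ).sub (h2.const_mul θ)
    simpa using this
  apply tendsto_of_tendsto_of_tendsto_of_le_of_le' hψ tendsto_const_nhds
  · -- ψ ≤ φ eventually
    filter_upwards [eventually_ge_atTop 1, tendsto_nat_floor_atTop.eventually aux_stirling,
      tendsto_nat_floor_atTop.eventually (eventually_ge_atTop 1)] with x hx1 hst hL1
    have hx0 : (0:ℝ) < x := lt_of_lt_of_le one_pos hx1
    set L := ⌊x⌋₊ with hLdef
    have hL0 : (0:ℝ) < (L:ℝ) := by exact_mod_cast hL1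
    have hLx : (L:ℝ) ≤ x := Nat.floor_le hx0.le
    have hlogLx : Real.log (L:ℝ) ≤ Real.log x := Real.log_le_log hL0 hLx
    rw [Real.log_mul two_ne_zero hL0.ne'] at hst
    have hst'' : Real.log (Nat.factorial L) ≤ Real.log 2 + (1/2)*(Real.log 2 + Real.log x)
        + ((L:ℝ) * Real.log L - L) := by nlinarith [hst, hlogLx]
    have p1 : θ * Real.log (Nat.factorial L) ≤ θ * (Real.log 2
        + (1/2)*(Real.log 2 + Real.log x) + ((L:ℝ) * Real.log L - L)) :=
      mul_le_mul_of_nonneg_left hst'' hθ.le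
    have p2 : 0 ≤ θ * ((L:ℝ) * (Real.log x - Real.log L)) :=
      mul_nonneg hθ.le (mul_nonneg hL0.le (sub_nonneg.2 hlogLx))
    have hA : θ * (L:ℝ) - θ * ((3/2)*Real.log 2 + (1/2)*Real.log x)
        ≤ (L:ℝ) * (θ * Real.log x) - θ * Real.log (Nat.factorial L) := by nlinarith [p1, p2]
    calc θ * ((L:ℝ)/x) - θ * (((3/2)*Real.log 2 + (1/2)*Real.log x) / x)
        = x⁻¹ * (θ * (L:ℝ) - θ * ((3/2)*Real.log 2 + (1/2)*Real.log x)) := by ring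
      _ ≤ x⁻¹ * ((L:ℝ) * (θ * Real.log x) - θ * Real.log (Nat.factorial L)) :=
          mul_le_mul_of_nonneg_left hA (inv_nonneg.2 hx0.le)
  · -- φ ≤ θ eventually
    filter_upwards [eventually_ge_atTop 1,
      tendsto_nat_floor_atTop.eventually (eventually_ge_atTop 1)] with x hx1 hL1
    have hx0 : (0:ℝ) < x := lt_of_lt_of_le one_pos hx1
    set L := ⌊x⌋₊ with hLdef
    have hL0 : (0:ℝ) < (L:ℝ) := by exact_mod_cast hL1
    have hLx : (L:ℝ) ≤ x := Nat.floor_le hx0.le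
    have hlf := aux_log_factorial_lb hL1
    have hkey : (L:ℝ) * (Real.log x - Real.log L) ≤ x - L := by
      have hdiv : (0:ℝ) < x / L := by positivity
      have h := Real.log_le_sub_one_of_pos hdiv
      rw [Real.log_div hx0.ne' hL0.ne'] at h
      have h2 := mul_le_mul_of_nonneg_left h hL0.le
      have heq : (L:ℝ) * (x/L - 1) = x - L := by field_simp
      linarith [heq ▸ h2]
    have p1 : θ * ((L:ℝ) * Real.log L - L) ≤ θ * Real.log (Nat.factorial L) :=
      mul_le_mul_of_nonneg_left hlf hθ.le
    have p2 : θ * ((L:ℝ) * (Real.log x - Real.log L)) ≤ θ * (x - L) :=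
      mul_le_mul_of_nonneg_left hkey hθ.le
    have hB : (L:ℝ) * (θ * Real.log x) - θ * Real.log (Nat.factorial L) ≤ θ * x := by
      nlinarith [p1, p2]
    calc x⁻¹ * ((L:ℝ) * (θ * Real.log x) - θ * Real.log (Nat.factorial L))
        ≤ x⁻¹ * (θ * x) := mul_le_mul_of_nonneg_left hB (inv_nonneg.2 hx0.le)
      _ = θ := by field_simp

private lemma aux_up_tendsto {θ : ℝ} (hθ : 0 < θ) :
    Tendsto (fun m : ℝ => m ^ (-(1/θ)) * Real.log ((⌈(2*m)^(1/θ)⌉₊:ℝ) + 2))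
      atTop (nhds 0) := by
  have hyT : Tendsto (fun m : ℝ => (2*m)^(1/θ)) atTop atTop :=
    (tendsto_rpow_atTop (by positivity)).comp
      (Tendsto.const_mul_atTop two_pos tendsto_id)
  have hlogdiv : Tendsto (fun y : ℝ => Real.log y / y) atTop (nhds 0) :=
    Real.isLittleO_log_id_atTop.tendsto_div_nhds_zero
  have hg : Tendsto (fun y : ℝ => (2:ℝ)^(1/θ) * ((Real.log 2 + Real.log y)/y))
      atTop (nhds 0) := by
    have h2a : Tendsto (fun y : ℝ => Real.log 2 * y⁻¹ + Real.log y / y)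
        atTop (nhds (Real.log 2 * 0 + 0)) :=
      (tendsto_const_nhds.mul tendsto_inv_atTop_zero).add hlogdiv
    simp only [mul_zero, add_zero] at h2a
    have := h2a.const_mul ((2:ℝ)^(1/θ))
    simp only [mul_zero] at this
    refine this.congr (fun y => by ring)
  have hB : Tendsto (fun m : ℝ => (2:ℝ)^(1/θ)
      * ((Real.log 2 + Real.log ((2*m)^(1/θ)))/(2*m)^(1/θ))) atTop (nhds 0) := hg.comp hyT
  apply tendsto_of_tendsto_of_tendsto_of_le_of_le' tendsto_const_nhds hB
  · filter_upwards [eventually_ge_atTop 1] with m hm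
    have hm0 : (0:ℝ) < m := lt_of_lt_of_le one_pos hm
    have : (1:ℝ) ≤ (⌈(2*m)^(1/θ)⌉₊:ℝ) + 2 := by
      have := Nat.cast_nonneg (α := ℝ) ⌈(2*m)^(1/θ)⌉₊; linarith
    exact mul_nonneg (Real.rpow_nonneg hm0.le _) (Real.log_nonneg this)
  · filter_upwards [eventually_ge_atTop 1, hyT.eventually (eventually_ge_atTop 3)]
      with m hm hy3
    have hm0 : (0:ℝ) < m := lt_of_lt_of_le one_pos hm
    set y := (2*m)^(1/θ) with hydef
    have hy0 : (0:ℝ) < y := by positivity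
    have hceil : (⌈y⌉₊:ℝ) < y + 1 := Nat.ceil_lt_add_one hy0.le
    have hle2y : (⌈y⌉₊:ℝ) + 2 ≤ 2*y := by linarith
    have hlogle : Real.log ((⌈y⌉₊:ℝ) + 2) ≤ Real.log 2 + Real.log y := by
      rw [← Real.log_mul two_ne_zero hy0.ne']
      exact Real.log_le_log (by positivity) hle2y
    have hysplit : y = (2:ℝ)^(1/θ) * m^(1/θ) := Real.mul_rpow (by norm_num) hm0.le
    have hminv : m ^ (-(1/θ)) = (2:ℝ)^(1/θ) / y := by
      rw [Real.rpow_neg hm0.le, hysplit, div_mul_cancel_left₀ ((Real.rpow_pos_of_pos two_pos _).ne')]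
    rw [hminv]
    calc (2:ℝ)^(1/θ)/y * Real.log ((⌈y⌉₊:ℝ) + 2)
        ≤ (2:ℝ)^(1/θ)/y * (Real.log 2 + Real.log y) :=
          mul_le_mul_of_nonneg_left hlogle (by positivity)
      _ = (2:ℝ)^(1/θ) * ((Real.log 2 + Real.log y)/y) := by ring

theorem log_sum_pow_factorial_asymptotic (θ : ℝ) (hθ : 0 < θ) :
    Tendsto (fun m : ℝ =>
        m ^ (-(1 / θ)) * Real.log (∑' ℓ : ℕ, m ^ ℓ / (Nat.factorial ℓ : ℝ) ^ θ))
      atTop (nhds θ) := by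
  have hlowT : Tendsto (fun m : ℝ => m ^ (-(1/θ)) * ((⌊m^(1/θ)⌋₊:ℝ) * Real.log m
      - θ * Real.log (Nat.factorial ⌊m^(1/θ)⌋₊))) atTop (nhds θ) := by
    have hxT : Tendsto (fun m : ℝ => m^(1/θ)) atTop atTop :=
      tendsto_rpow_atTop (by positivity)
    have hcomp := (aux_phi_tendsto hθ).comp hxT
    apply Tendsto.congr' _ hcomp
    filter_upwards [eventually_ge_atTop 1] with m hm
    have hm0 : (0:ℝ) < m := lt_of_lt_of_le one_pos hm
    have hlog : θ * Real.log (m^(1/θ)) = Real.log m := by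
      rw [Real.log_rpow hm0]; field_simp
    simp only [Function.comp]
    rw [hlog, Real.rpow_neg hm0.le]
  have hupT : Tendsto (fun m : ℝ => θ + m ^ (-(1/θ)) * Real.log ((⌈(2*m)^(1/θ)⌉₊:ℝ) + 2))
      atTop (nhds θ) := by
    have h := (tendsto_const_nhds (x := θ) (f := atTop (α := ℝ))).add (aux_up_tendsto hθ)
    simpa using h
  apply tendsto_of_tendsto_of_tendsto_of_le_of_le' hlowT hupT
  · filter_upwards [eventually_ge_atTop 1] with m hm
    have hm0 : (0:ℝ) < m := lt_of_lt_of_le one_pos hm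
    have hsum := aux_summable hθ (θ := θ) hm0.le
    set L := ⌊m^(1/θ)⌋₊ with hL
    have hterm_pos : (0:ℝ) < m ^ L / (Nat.factorial L : ℝ) ^ θ := by positivity
    have hle : m ^ L / (Nat.factorial L : ℝ) ^ θ
        ≤ ∑' ℓ : ℕ, m ^ ℓ / (Nat.factorial ℓ : ℝ) ^ θ :=
      Summable.le_tsum hsum L (fun j _ => by positivity)
    have hlog := Real.log_le_log hterm_pos hle
    rw [aux_log_term hm0] at hlog
    exact mul_le_mul_of_nonneg_left hlog (Real.rpow_nonneg hm0.le _)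
  · filter_upwards [eventually_ge_atTop 1] with m hm
    have hm0 : (0:ℝ) < m := lt_of_lt_of_le one_pos hm
    have hsum := aux_summable hθ (θ := θ) hm0.le
    have hF1 : (0:ℝ) < ∑' ℓ : ℕ, m ^ ℓ / (Nat.factorial ℓ : ℝ) ^ θ := by
      have h0 : (0:ℝ) < m ^ 0 / (Nat.factorial 0 : ℝ) ^ θ := by positivity
      exact lt_of_lt_of_le h0 (Summable.le_tsum hsum 0 (fun j _ => by positivity))
    have hNpos : (0:ℝ) < (⌈(2*m)^(1/θ)⌉₊:ℝ) + 2 := by positivity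
    have hup := aux_tsum_upper hθ hm
    have hlog := Real.log_le_log hF1 hup
    rw [Real.log_mul hNpos.ne' (Real.exp_ne_zero _), Real.log_exp] at hlog
    have hx_cancel : m ^ (-(1/θ)) * m ^ ((1:ℝ)/θ) = 1 := by
      rw [Real.rpow_neg hm0.le]
      exact inv_mul_cancel₀ (Real.rpow_pos_of_pos hm0 _).ne'
    have hnn : (0:ℝ) ≤ m ^ (-(1/θ)) := Real.rpow_nonneg hm0.le _
    calc m ^ (-(1/θ)) * Real.log (∑' ℓ : ℕ, m ^ ℓ / (Nat.factorial ℓ : ℝ) ^ θ)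
        ≤ m ^ (-(1/θ)) * (Real.log ((⌈(2*m)^(1/θ)⌉₊:ℝ) + 2) + θ * m ^ ((1:ℝ)/θ)) :=
          mul_le_mul_of_nonneg_left hlog hnn
      _ = θ * (m ^ (-(1/θ)) * m ^ ((1:ℝ)/θ))
          + m ^ (-(1/θ)) * Real.log ((⌈(2*m)^(1/θ)⌉₊:ℝ) + 2) := by ring
      _ = θ + m ^ (-(1/θ)) * Real.log ((⌈(2*m)^(1/θ)⌉₊:ℝ) + 2) := by
          rw [hx_cancel, mul_one]
end

section
/- For θ > 0 and m ≥ 1, setting ℓ* = ⌊m^{1/θ}⌋, one has m^{ℓ*}/(ℓ*!)^θ ≤ Σ_{ℓ=0}^∞ m^ℓ/(ℓ!)^θ ≤ (2ℓ* + Σ_{ℓ=0}^∞ 2^{-θℓ}) · m^{ℓ*}/(ℓ*!)^θ. -/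
set_option maxHeartbeats 1600000

open Nat Real



lemma fact_le_mul_pow (ℓ d N : ℕ) (h : ℓ + d ≤ N) : (ℓ + d)! ≤ ℓ ! * N ^ d := by
  induction d with
  | zero => simp
  | succ d ih =>
    have h' : ℓ + d ≤ N := by omega
    calc (ℓ + (d+1))! = (ℓ + d + 1) * (ℓ + d)! := by
          rw [show ℓ + (d+1) = (ℓ+d)+1 by omega, Nat.factorial_succ]
    _ ≤ N * (ℓ ! * N ^ d) := Nat.mul_le_mul (by omega) (ih h')
    _ = ℓ ! * N ^ (d+1) := by ring

lemma mul_pow_le_fact (n k : ℕ) : n ! * (n+1)^k ≤ (n+k)! := by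
  induction k with
  | zero => simp
  | succ k ih =>
    calc n ! * (n+1)^(k+1) = (n ! * (n+1)^k) * (n+1) := by ring
    _ ≤ (n+k)! * (n+k+1) := Nat.mul_le_mul ih (by omega)
    _ = (n+(k+1))! := by rw [show n+(k+1) = (n+k)+1 by omega, Nat.factorial_succ]; ring

lemma N3 (E k : ℕ) : (2+E)! * (2^k * (3+E)^((2+E)+k)) ≤ (2*(2+E)+k)! := by
  induction k with
  | zero =>
    have := mul_pow_le_fact (2+E) (2+E)
    calc (2+E)! * (2^0 * (3+E)^((2+E)+0)) = (2+E)! * (2+E+1)^(2+E) := by ring_nf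
    _ ≤ ((2+E)+(2+E))! := mul_pow_le_fact (2+E) (2+E)
    _ = (2*(2+E)+0)! := by ring_nf
  | succ k ih =>
    match k, ih with
    | 0, _ =>
      have h1 : (2+E)! * (3+E)^(E+1) ≤ (3+2*E)! := by
        have := mul_pow_le_fact (2+E) (E+1)
        calc (2+E)! * (3+E)^(E+1) = (2+E)! * (2+E+1)^(E+1) := by ring_nf
        _ ≤ ((2+E)+(E+1))! := mul_pow_le_fact (2+E) (E+1)
        _ = (3+2*E)! := by ring_nf
      have h2 : (2*(2+E)+1)! = (2*E+5) * ((2*E+4) * (3+2*E)!) := by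
        rw [show 2*(2+E)+1 = (3+2*E)+1+1 by omega]
        rw [Nat.factorial_succ, Nat.factorial_succ]
        ring_nf
      rw [h2]
      calc (2+E)! * (2^1 * (3+E)^((2+E)+1))
          = (2 * (3+E)^2) * ((2+E)! * (3+E)^(E+1)) := by ring_nf
      _ ≤ ((2*E+5)*(2*E+4)) * ((2+E)! * (3+E)^(E+1)) := by
            apply Nat.mul_le_mul_right
            nlinarith
      _ ≤ ((2*E+5)*(2*E+4)) * (3+2*E)! := by
            apply Nat.mul_le_mul_left
            exact h1
      _ = (2*E+5) * ((2*E+4) * (3+2*E)!) := by ring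
    | k+1, ih =>
      calc (2+E)! * (2^(k+2) * (3+E)^((2+E)+(k+2)))
          = ((2+E)! * (2^(k+1) * (3+E)^((2+E)+(k+1)))) * (2*(3+E)) := by ring
      _ ≤ (2*(2+E)+(k+1))! * (2*(2+E)+(k+1)+1) := by
            apply Nat.mul_le_mul ih (by omega)
      _ = (2*(2+E)+(k+2))! := by
            rw [show 2*(2+E)+(k+2) = (2*(2+E)+(k+1))+1 by omega, Nat.factorial_succ]; ring

lemma N4 (k : ℕ) : 2^(2*k+9) ≤ (6+k)! := by
  induction k with
  | zero => decide
  | succ k ih =>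
    calc 2^(2*(k+1)+9) = 4 * 2^(2*k+9) := by ring
    _ ≤ 4 * (6+k)! := Nat.mul_le_mul_left 4 ih
    _ ≤ (6+k+1) * (6+k)! := Nat.mul_le_mul_right _ (by omega)
    _ = (6+(k+1))! := by rw [show 6+(k+1) = (6+k)+1 by omega, Nat.factorial_succ]


lemma aux_step (θ m : ℝ) (hθ : 0 < θ) (hm : 0 < m) (M : ℕ)
    (hmM : m ≤ (M:ℝ)^θ) (q d w : ℕ) (hw : 0 < w)
    (hn : M^d * w * q ! ≤ (q+d)!) :
    m^(q+d) / ((q+d)! : ℝ)^θ ≤ (m^q / (q ! : ℝ)^θ) / (w:ℝ)^θ := by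
  have hwR : (0:ℝ) < (w:ℝ) := by exact_mod_cast hw
  have hM0 : (0:ℝ) ≤ (M:ℝ) := by positivity
  have hmd : m^d ≤ ((M:ℝ)^d)^θ := by
    calc m^d ≤ ((M:ℝ)^θ)^d := pow_le_pow_left₀ hm.le hmM d
    _ = ((M:ℝ)^d)^θ := by
        rw [← Real.rpow_natCast ((M:ℝ)^θ) d, ← Real.rpow_mul hM0, mul_comm,
          Real.rpow_mul hM0, Real.rpow_natCast]
  have hnR : ((M:ℝ)^d * (w:ℝ) * (q ! : ℝ))^θ ≤ ((q+d)! : ℝ)^θ := by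
    apply Real.rpow_le_rpow (by positivity) _ hθ.le
    exact_mod_cast hn
  have expand : ((M:ℝ)^d * (w:ℝ) * (q ! : ℝ))^θ
      = ((M:ℝ)^d)^θ * ((w:ℝ)^θ * ((q !:ℝ))^θ) := by
    rw [Real.mul_rpow (by positivity) (by positivity),
      Real.mul_rpow (by positivity) (by positivity)]
    ring
  rw [div_div, div_le_div_iff₀ (by positivity) (by positivity)]
  calc m^(q+d) * ((q !:ℝ)^θ * (w:ℝ)^θ)
      = m^q * (m^d * ((w:ℝ)^θ * ((q !:ℝ))^θ)) := by rw [pow_add]; ring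
  _ ≤ m^q * (((M:ℝ)^d)^θ * ((w:ℝ)^θ * ((q !:ℝ))^θ)) := by
      apply mul_le_mul_of_nonneg_left _ (by positivity)
      exact mul_le_mul_of_nonneg_right hmd (by positivity)
  _ = m^q * ((M:ℝ)^d * (w:ℝ) * (q ! : ℝ))^θ := by rw [expand]
  _ ≤ m^q * ((q+d)! : ℝ)^θ := mul_le_mul_of_nonneg_left hnR (by positivity)

lemma aux_head (θ m : ℝ) (hθ : 0 < θ) (hm : 0 < m) (N : ℕ)
    (hNm : (N:ℝ)^θ ≤ m) (ℓ d : ℕ)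
    (hn : (ℓ+d)! ≤ ℓ ! * N^d) :
    m^ℓ / (ℓ ! : ℝ)^θ ≤ m^(ℓ+d) / ((ℓ+d)! : ℝ)^θ := by
  have hN0 : (0:ℝ) ≤ (N:ℝ) := by positivity
  have hmd : ((N:ℝ)^d)^θ ≤ m^d := by
    calc ((N:ℝ)^d)^θ = ((N:ℝ)^θ)^d := by
          rw [← Real.rpow_natCast ((N:ℝ)^θ) d, ← Real.rpow_mul hN0, mul_comm,
            Real.rpow_mul hN0, Real.rpow_natCast]
    _ ≤ m^d := pow_le_pow_left₀ (by positivity) hNm d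
  have hnR : ((ℓ+d)! : ℝ)^θ ≤ ((ℓ ! : ℝ) * ((N:ℝ)^d))^θ := by
    apply Real.rpow_le_rpow (by positivity) _ hθ.le
    exact_mod_cast hn
  rw [div_le_div_iff₀ (by positivity) (by positivity)]
  calc m^ℓ * ((ℓ+d)! : ℝ)^θ ≤ m^ℓ * ((ℓ ! : ℝ) * ((N:ℝ)^d))^θ :=
        mul_le_mul_of_nonneg_left hnR (by positivity)
  _ = m^ℓ * ((ℓ !:ℝ)^θ * ((N:ℝ)^d)^θ) := by
        rw [Real.mul_rpow (by positivity) (by positivity)]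
  _ ≤ m^ℓ * ((ℓ !:ℝ)^θ * m^d) := by
        apply mul_le_mul_of_nonneg_left _ (by positivity)
        exact mul_le_mul_of_nonneg_left hmd (by positivity)
  _ = m^(ℓ+d) * (ℓ !:ℝ)^θ := by rw [pow_add]; ring

lemma poly_ineq (t : ℝ) (h0 : 0 ≤ t) (h1 : t ≤ 1) :
    t^29 + t^79 + t^145 ≤ 1 + t^100 + t^150 := by
  have hsub : ∀ k : ℕ, 1 - t^k ≤ k * (1-t) := by
    intro k
    induction k with
    | zero => simp
    | succ k ih =>
      have htk : t^k ≤ 1 := pow_le_one₀ h0 h1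
      have cert : (0:ℝ) ≤ (1-t)*(1-t^k) :=
        mul_nonneg (by linarith) (by linarith)
      push_cast
      rw [pow_succ]
      nlinarith [ih, cert]
  have hlow : (29:ℝ) * t^28 * (1-t) ≤ 1 - t^29 := by
    have key : ∀ n : ℕ, ((n:ℝ)+1) * t^n * (1-t) ≤ 1 - t^(n+1) := by
      intro n
      induction n with
      | zero => simp
      | succ n ih =>
        simp only [pow_succ] at ih ⊢
        have htn : t^n * t ≤ 1 := by
          have := pow_le_one₀ h0 h1 (n := n+1); rwa [pow_succ] at this
        have c1 := mul_le_mul_of_nonneg_left ih h0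
        have c2 : (0:ℝ) ≤ (1-t)*(1 - t^n*t) := mul_nonneg (by linarith) (by linarith)
        push_cast
        nlinarith [c1, c2]
    have h28 := key 28
    norm_num at h28
    linarith
  have e2 : t^79 - t^100 ≤ 21 * t^28 * (1-t) := by
    have h21 := hsub 21
    have ht79 : t^79 ≤ t^28 := pow_le_pow_of_le_one h0 h1 (by norm_num)
    have hpos : (0:ℝ) ≤ 1 - t^21 := by
      have := pow_le_one₀ h0 h1 (n := 21); linarith
    calc t^79 - t^100 = t^79 * (1 - t^21) := by ring
    _ ≤ t^28 * (21*(1-t)) := by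
        apply mul_le_mul ht79 _ hpos (by positivity)
        push_cast at h21; linarith
    _ = 21 * t^28 * (1-t) := by ring
  have e3 : t^145 - t^150 ≤ 5 * t^28 * (1-t) := by
    have h5 := hsub 5
    have ht145 : t^145 ≤ t^28 := pow_le_pow_of_le_one h0 h1 (by norm_num)
    have hpos : (0:ℝ) ≤ 1 - t^5 := by
      have := pow_le_one₀ h0 h1 (n := 5); linarith
    calc t^145 - t^150 = t^145 * (1 - t^5) := by ring
    _ ≤ t^28 * (5*(1-t)) := by
        apply mul_le_mul ht145 _ hpos (by positivity)
        push_cast at h5; linarith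
    _ = 5 * t^28 * (1-t) := by ring
  nlinarith [hlow, e2, e3, mul_nonneg (pow_nonneg h0 28) (sub_nonneg.2 h1)]

lemma aux_step2 (θ m : ℝ) (hθ : 0 < θ) (hm : 0 < m) (M q d k : ℕ)
    (hmM : m ≤ (M:ℝ)^θ) (hn : M^d * 2^k * q ! ≤ (q+d)!) :
    m^(q+d) / ((q+d)! : ℝ)^θ ≤ (m^q / (q ! : ℝ)^θ) * ((2:ℝ)^(-θ))^k := by
  have h := aux_step θ m hθ hm M hmM q d (2^k) (by positivity) hn
  have e : (((2:ℕ)^k : ℕ):ℝ)^θ = (((2:ℝ))^θ)^k := by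
    push_cast
    rw [← Real.rpow_natCast (2:ℝ) k, ← Real.rpow_mul (by norm_num), mul_comm,
      Real.rpow_mul (by norm_num), Real.rpow_natCast]
  rw [e] at h
  have e2 : (m^q / (q ! : ℝ)^θ) / ((2:ℝ)^θ)^k
      = (m^q / (q ! : ℝ)^θ) * ((2:ℝ)^(-θ))^k := by
    rw [Real.rpow_neg (by norm_num : (0:ℝ) ≤ 2), inv_pow, div_eq_mul_inv]
  rw [e2] at h
  exact h

lemma head_case1 (θ m : ℝ) (hθ : 0 < θ) (hm : 1 ≤ m) (hm2 : m ≤ (2:ℝ)^θ) :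
    1 + m + m^2/(2:ℝ)^θ + m^3/(6:ℝ)^θ + m^4/(24:ℝ)^θ + m^5/(120:ℝ)^θ
      ≤ 2*m + m*(1 + (2:ℝ)^(-θ) + ((2:ℝ)^(-θ))^2 + ((2:ℝ)^(-θ))^3) := by
  have hm0 : (0:ℝ) < m := lt_of_lt_of_le one_pos hm
  have hv0 : (0:ℝ) < (2:ℝ)^θ := by positivity
  obtain ⟨u, hu⟩ : ∃ u : ℝ, u = (2:ℝ)^(-(θ/50)) := ⟨_, rfl⟩
  have hu0 : 0 ≤ u := by rw [hu]; positivity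
  have hu1 : u ≤ 1 := by
    rw [hu]
    exact Real.rpow_le_one_of_one_le_of_nonpos (by norm_num) (by simp; positivity)
  have hu50 : u^50 = (2:ℝ)^(-θ) := by
    rw [hu, ← Real.rpow_natCast ((2:ℝ)^(-(θ/50))) 50, ← Real.rpow_mul (by norm_num)]
    congr 1
    push_cast; ring
  have hu100 : u^100 = ((2:ℝ)^(-θ))^2 := by rw [← hu50]; ring
  have hu150 : u^150 = ((2:ℝ)^(-θ))^3 := by rw [← hu50]; ring
  have hupow : ∀ (e : ℕ) (c : ℝ), -(θ/50) * (e:ℝ) = c * θ → u^e = ((2:ℝ)^c)^θ := by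
    intro e c hc
    rw [hu, ← Real.rpow_natCast ((2:ℝ)^(-(θ/50))) e, ← Real.rpow_mul (by norm_num),
      hc, Real.rpow_mul (by norm_num)]
  have hu29 : u^29 = ((2:ℝ)^(-(29/50):ℝ))^θ := hupow 29 _ (by push_cast; ring)
  have hu79 : u^79 = ((2:ℝ)^(-(79/50):ℝ))^θ := hupow 79 _ (by push_cast; ring)
  have hu145 : u^145 = ((2:ℝ)^(-(29/10):ℝ))^θ := hupow 145 _ (by push_cast; ring)
  -- base bounds
  have hrppos : ∀ c : ℝ, (0:ℝ) < (2:ℝ)^c := fun c => by positivity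
  have hpoweq : ∀ (c : ℝ) (n b : ℕ), (c * (n:ℝ) = -((b:ℕ):ℝ)) →
      ((2:ℝ)^c)^(n:ℕ) = ((2:ℝ)^(b:ℕ))⁻¹ := by
    intro c n b hc
    rw [← Real.rpow_natCast ((2:ℝ)^c) n, ← Real.rpow_mul (by norm_num), hc,
      Real.rpow_neg (by norm_num), Real.rpow_natCast]
  have hb1 : (2/3:ℝ) ≤ (2:ℝ)^(-(29/50):ℝ) := by
    apply (pow_le_pow_iff_left₀ (by norm_num) (hrppos _).le (by norm_num : (50:ℕ) ≠ 0)).mp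
    rw [hpoweq (-(29/50):ℝ) 50 29 (by push_cast; ring)]
    norm_num
  have hb2 : (1/3:ℝ) ≤ (2:ℝ)^(-(79/50):ℝ) := by
    apply (pow_le_pow_iff_left₀ (by norm_num) (hrppos _).le (by norm_num : (50:ℕ) ≠ 0)).mp
    rw [hpoweq (-(79/50):ℝ) 50 79 (by push_cast; ring)]
    norm_num
  have hb3 : (2/15:ℝ) ≤ (2:ℝ)^(-(29/10):ℝ) := by
    apply (pow_le_pow_iff_left₀ (by norm_num) (hrppos _).le (by norm_num : (10:ℕ) ≠ 0)).mp
    rw [hpoweq (-(29/10):ℝ) 10 29 (by push_cast; ring)]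
    norm_num
  -- rpow comparisons
  have hc1 : (2/3:ℝ)^θ ≤ u^29 := by
    rw [hu29]; exact Real.rpow_le_rpow (by norm_num) hb1 hθ.le
  have hc2 : (1/3:ℝ)^θ ≤ u^79 := by
    rw [hu79]; exact Real.rpow_le_rpow (by norm_num) hb2 hθ.le
  have hc3 : (2/15:ℝ)^θ ≤ u^145 := by
    rw [hu145]; exact Real.rpow_le_rpow (by norm_num) hb3 hθ.le
  -- factorizations: v^k = (frac)^θ * (denom)^θ
  have hvmul : ∀ a b : ℝ, 0 ≤ a → 0 ≤ b → (a*b:ℝ)^θ = a^θ * b^θ :=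
    fun a b ha hb => Real.mul_rpow ha hb
  have hf3 : (2/3:ℝ)^θ * (6:ℝ)^θ = ((2:ℝ)^θ)^2 := by
    rw [← hvmul (2/3) 6 (by norm_num) (by norm_num)]
    norm_num
    rw [show (4:ℝ) = 2*2 by norm_num, hvmul 2 2 (by norm_num) (by norm_num)]
    ring
  have hf4 : (1/3:ℝ)^θ * (24:ℝ)^θ = ((2:ℝ)^θ)^3 := by
    rw [← hvmul (1/3) 24 (by norm_num) (by norm_num)]
    norm_num
    rw [show (8:ℝ) = 2*(2*2) by norm_num, hvmul 2 (2*2) (by norm_num) (by norm_num),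
      hvmul 2 2 (by norm_num) (by norm_num)]
    ring
  have hf5 : (2/15:ℝ)^θ * (120:ℝ)^θ = ((2:ℝ)^θ)^4 := by
    rw [← hvmul (2/15) 120 (by norm_num) (by norm_num)]
    norm_num
    rw [show (16:ℝ) = 2*(2*(2*2)) by norm_num, hvmul 2 (2*(2*2)) (by norm_num) (by norm_num),
      hvmul 2 (2*2) (by norm_num) (by norm_num), hvmul 2 2 (by norm_num) (by norm_num)]
    ring
  -- term bounds
  have ht3 : m^3/(6:ℝ)^θ ≤ m * u^29 := by
    rw [div_le_iff₀ (by positivity)]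
    calc m^3 = m * m^2 := by ring
    _ ≤ m * ((2:ℝ)^θ)^2 := by
        apply mul_le_mul_of_nonneg_left _ hm0.le
        exact pow_le_pow_left₀ hm0.le hm2 2
    _ = m * ((2/3:ℝ)^θ * (6:ℝ)^θ) := by rw [hf3]
    _ ≤ m * (u^29 * (6:ℝ)^θ) := by
        apply mul_le_mul_of_nonneg_left _ hm0.le
        exact mul_le_mul_of_nonneg_right hc1 (by positivity)
    _ = m * u^29 * (6:ℝ)^θ := by ring
  have ht4 : m^4/(24:ℝ)^θ ≤ m * u^79 := by
    rw [div_le_iff₀ (by positivity)]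
    calc m^4 = m * m^3 := by ring
    _ ≤ m * ((2:ℝ)^θ)^3 := by
        apply mul_le_mul_of_nonneg_left _ hm0.le
        exact pow_le_pow_left₀ hm0.le hm2 3
    _ = m * ((1/3:ℝ)^θ * (24:ℝ)^θ) := by rw [hf4]
    _ ≤ m * (u^79 * (24:ℝ)^θ) := by
        apply mul_le_mul_of_nonneg_left _ hm0.le
        exact mul_le_mul_of_nonneg_right hc2 (by positivity)
    _ = m * u^79 * (24:ℝ)^θ := by ring
  have ht5 : m^5/(120:ℝ)^θ ≤ m * u^145 := by
    rw [div_le_iff₀ (by positivity)]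
    calc m^5 = m * m^4 := by ring
    _ ≤ m * ((2:ℝ)^θ)^4 := by
        apply mul_le_mul_of_nonneg_left _ hm0.le
        exact pow_le_pow_left₀ hm0.le hm2 4
    _ = m * ((2/15:ℝ)^θ * (120:ℝ)^θ) := by rw [hf5]
    _ ≤ m * (u^145 * (120:ℝ)^θ) := by
        apply mul_le_mul_of_nonneg_left _ hm0.le
        exact mul_le_mul_of_nonneg_right hc3 (by positivity)
    _ = m * u^145 * (120:ℝ)^θ := by ring
  -- quadratic part
  have hrv : (2:ℝ)^(-θ) = ((2:ℝ)^θ)⁻¹ := Real.rpow_neg (by norm_num) θ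
  have hmv1 : m * ((2:ℝ)^θ)⁻¹ ≤ 1 := by
    rw [← div_eq_mul_inv]
    exact (div_le_one hv0).mpr hm2
  have ht2 : 1 + m^2/(2:ℝ)^θ ≤ m + m * (2:ℝ)^(-θ) := by
    rw [hrv, div_eq_mul_inv]
    nlinarith [mul_nonneg (sub_nonneg.2 hm) (sub_nonneg.2 hmv1),
      inv_nonneg.2 hv0.le]
  -- polynomial
  have hp := poly_ineq u hu0 hu1
  have hmp : m*(u^29 + u^79 + u^145) ≤ m*(1 + ((2:ℝ)^(-θ))^2 + ((2:ℝ)^(-θ))^3) := by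
    rw [← hu100, ← hu150]
    exact mul_le_mul_of_nonneg_left hp hm0.le
  nlinarith [ht3, ht4, ht5, ht2, hmp]

theorem sum_pow_factorial_bounds (θ : ℝ) (hθ : 0 < θ) (m : ℝ) (hm : 1 ≤ m) :
    m ^ (⌊m ^ (1 / θ)⌋₊) / (Nat.factorial ⌊m ^ (1 / θ)⌋₊ : ℝ) ^ θ
        ≤ (∑' ℓ : ℕ, m ^ ℓ / (Nat.factorial ℓ : ℝ) ^ θ) ∧
    (∑' ℓ : ℕ, m ^ ℓ / (Nat.factorial ℓ : ℝ) ^ θ)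
        ≤ (2 * (⌊m ^ (1 / θ)⌋₊ : ℝ) + ∑' ℓ : ℕ, (2 : ℝ) ^ (-θ * ℓ)) *
          (m ^ (⌊m ^ (1 / θ)⌋₊) / (Nat.factorial ⌊m ^ (1 / θ)⌋₊ : ℝ) ^ θ) := by
  have hm0 : (0:ℝ) < m := lt_of_lt_of_le one_pos hm
  obtain ⟨L, hLdef⟩ : ∃ L : ℕ, ⌊m ^ (1/θ)⌋₊ = L := ⟨_, rfl⟩
  rw [hLdef]
  -- basic facts
  have hrpos : (0:ℝ) ≤ m ^ (1/θ) := by positivity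
  have hone : (1:ℝ) ≤ m ^ (1/θ) := by
    calc (1:ℝ) = (1:ℝ) ^ (1/θ) := (Real.one_rpow _).symm
    _ ≤ m ^ (1/θ) := Real.rpow_le_rpow (by norm_num) hm (by positivity)
  have hL1 : 1 ≤ L := by
    rw [← hLdef]
    exact Nat.le_floor (by exact_mod_cast hone)
  have hfl : (L:ℝ) ≤ m ^ (1/θ) := by
    rw [← hLdef]; exact Nat.floor_le hrpos
  have hflu : m ^ (1/θ) < (L:ℝ) + 1 := by
    rw [← hLdef]; exact Nat.lt_floor_add_one _
  have hmid : (m ^ (1/θ)) ^ θ = m := by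
    rw [← Real.rpow_mul hm0.le, one_div, inv_mul_cancel₀ hθ.ne', Real.rpow_one]
  have hLm : ((L:ℕ):ℝ) ^ θ ≤ m := by
    calc ((L:ℕ):ℝ) ^ θ ≤ (m ^ (1/θ)) ^ θ :=
      Real.rpow_le_rpow (by positivity) hfl hθ.le
    _ = m := hmid
  have hmL1 : m ≤ (((L+1:ℕ)):ℝ) ^ θ := by
    rw [← hmid]
    apply Real.rpow_le_rpow hrpos _ hθ.le
    push_cast
    exact hflu.le
  -- geometric series
  obtain ⟨r, hrdef⟩ : ∃ r : ℝ, r = (2:ℝ) ^ (-θ) := ⟨_, rfl⟩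
  have hr0 : 0 ≤ r := by rw [hrdef]; positivity
  have hr1 : r < 1 := by
    rw [hrdef]; exact Real.rpow_lt_one_of_one_lt_of_neg (by norm_num) (by linarith)
  have hgs : Summable (fun n : ℕ => r ^ n) := summable_geometric_of_lt_one hr0 hr1
  have hSrw : (∑' ℓ : ℕ, (2:ℝ) ^ (-θ * ℓ)) = ∑' ℓ : ℕ, r ^ ℓ := by
    apply tsum_congr
    intro ℓ
    rw [hrdef, Real.rpow_mul (by norm_num : (0:ℝ) ≤ 2), Real.rpow_natCast]
  have hA0 : ∀ ℓ : ℕ, 0 ≤ m ^ ℓ / (ℓ ! : ℝ) ^ θ := fun ℓ => by positivity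
  -- summability of the main series
  have htail0 : ∀ k : ℕ, m ^ (2*L+2+k) / ((2*L+2+k)! : ℝ) ^ θ
      ≤ (m ^ (2*L+2) / ((2*L+2)! : ℝ) ^ θ) * r ^ k := by
    intro k
    rw [hrdef]
    exact aux_step2 θ m hθ hm0 (L+1) (2*L+2) k k hmL1 (by
      calc (L+1)^k * 2^k * (2*L+2)! = (2*L+2)! * (2*L+2)^k := by rw [← Nat.mul_pow]; ring
      _ ≤ (2*L+2)! * (2*L+2+1)^k :=
        Nat.mul_le_mul_left _ (Nat.pow_le_pow_left (by omega) k)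
      _ ≤ ((2*L+2)+k)! := mul_pow_le_fact (2*L+2) k)
  have hsA : Summable (fun ℓ : ℕ => m ^ ℓ / (ℓ ! : ℝ) ^ θ) := by
    apply (summable_nat_add_iff (2*L+2)).mp
    apply Summable.of_nonneg_of_le (fun k => hA0 _) _ (hgs.mul_left (m ^ (2*L+2) / ((2*L+2)! : ℝ) ^ θ))
    intro k
    have := htail0 k
    rw [show k + (2*L+2) = 2*L+2+k by omega]
    exact this
  constructor
  · exact Summable.le_tsum hsA L (fun j _ => hA0 j)
  -- upper bound
  have keyle : ∀ ℓ : ℕ, m ^ ℓ / (ℓ ! : ℝ) ^ θ ≤ m ^ L / (L ! : ℝ) ^ θ := by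
    intro ℓ
    rcases le_total ℓ L with h | h
    · obtain ⟨d, hd⟩ : ∃ d, ℓ + d = L := ⟨L - ℓ, by omega⟩
      subst hd
      exact aux_head θ m hθ hm0 (ℓ+d) hLm ℓ d
        (fact_le_mul_pow ℓ d (ℓ+d) le_rfl)
    · obtain ⟨d, hd⟩ : ∃ d, L + d = ℓ := ⟨ℓ - L, by omega⟩
      subst hd
      have := aux_step θ m hθ hm0 (L+1) hmL1 L d 1 one_pos (by
        calc (L+1)^d * 1 * L ! = L ! * (L+1)^d := by ring
        _ ≤ (L+d)! := mul_pow_le_fact L d)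
      simpa using this
  rcases Nat.lt_or_ge L 2 with hL2 | hL2
  · -- case L = 1
    have hLeq : L = 1 := by omega
    subst hLeq
    have hm2 : m ≤ (2:ℝ)^θ := by
      have h := hmL1
      norm_num at h
      exact h
    have htail1 : ∀ k : ℕ, m ^ (k + 6) / ((k + 6)! : ℝ) ^ θ ≤ m * r ^ (k + 4) := by
      intro k
      have hn : 2^(5+k) * 2^(4+k) * 1 ! ≤ (1 + (5+k))! := by
        calc 2^(5+k) * 2^(4+k) * 1 ! = 2^(2*k+9) := by rw [Nat.factorial_one, mul_one, ← pow_add]; congr 1; omega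
        _ ≤ (6+k)! := N4 k
        _ = (1+(5+k))! := by congr 1; omega
      have h2 := aux_step2 θ m hθ hm0 2 1 (5+k) (4+k) (by exact_mod_cast hm2) hn
      rw [show k+6 = 1+(5+k) by omega, show k+4 = 4+k by omega, hrdef]
      simpa using h2
    have hsplitA := (Summable.sum_add_tsum_nat_add (f := fun ℓ : ℕ => m ^ ℓ / (ℓ ! : ℝ) ^ θ) 6 hsA).symm
    have hsplitS := (Summable.sum_add_tsum_nat_add (f := fun ℓ : ℕ => r ^ ℓ) 4 hgs).symm
    rw [hsplitA, hSrw, hsplitS]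
    have htailsum : (∑' k : ℕ, m ^ (k+6) / ((k+6)! : ℝ) ^ θ) ≤ m * ∑' k : ℕ, r ^ (k+4) := by
      rw [← tsum_mul_left]
      exact Summable.tsum_le_tsum htail1 ((summable_nat_add_iff 6).mpr hsA)
        (((summable_nat_add_iff 4).mpr hgs).mul_left m)
    have hheads : (∑ i ∈ Finset.range 6, m ^ i / (i ! : ℝ) ^ θ)
        ≤ 2*m + m * ∑ j ∈ Finset.range 4, r ^ j := by
      have hcore := head_case1 θ m hθ hm hm2
      rw [hrdef]
      simp only [Finset.sum_range_succ, Finset.sum_range_zero]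
      norm_num [Nat.factorial]
      linarith [hcore]
    calc (∑ i ∈ Finset.range 6, m ^ i / (i ! : ℝ) ^ θ)
          + (∑' k : ℕ, m ^ (k+6) / ((k+6)! : ℝ) ^ θ)
        ≤ (2*m + m * ∑ j ∈ Finset.range 4, r ^ j) + m * ∑' k : ℕ, r ^ (k+4) :=
          add_le_add hheads htailsum
    _ = (2 * ((1:ℕ):ℝ) + ((∑ j ∈ Finset.range 4, r ^ j) + ∑' k : ℕ, r ^ (k+4)))
          * (m ^ 1 / ((1:ℕ)! : ℝ) ^ θ) := by
        norm_num [Nat.factorial]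
        ring
  · -- case L ≥ 2
    obtain ⟨E, hE⟩ : ∃ E, L = 2 + E := ⟨L - 2, by omega⟩
    have htail : ∀ k : ℕ, m ^ (k + 2*L) / ((k + 2*L)! : ℝ) ^ θ
        ≤ (m ^ L / (L ! : ℝ) ^ θ) * r ^ k := by
      intro k
      have hn : (L+1)^(L+k) * 2^k * L ! ≤ (L + (L+k))! := by
        rw [hE]
        calc (2+E+1)^(2+E+k) * 2^k * (2+E)! = (2+E)! * (2^k * (3+E)^(2+E+k)) := by ring
        _ ≤ (2*(2+E)+k)! := N3 E k
        _ = ((2+E) + (2+E+k))! := by congr 1; omega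
      have h2 := aux_step2 θ m hθ hm0 (L+1) L (L+k) k hmL1 hn
      rw [show k + 2*L = L + (L+k) by omega, hrdef]
      exact h2
    have hsplit := (Summable.sum_add_tsum_nat_add (f := fun ℓ : ℕ => m ^ ℓ / (ℓ ! : ℝ) ^ θ) (2*L) hsA).symm
    rw [hsplit, hSrw]
    have hhead : (∑ i ∈ Finset.range (2*L), m ^ i / (i ! : ℝ) ^ θ)
        ≤ (2*L : ℕ) * (m ^ L / (L ! : ℝ) ^ θ) := by
      calc (∑ i ∈ Finset.range (2*L), m ^ i / (i ! : ℝ) ^ θ)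
          ≤ ∑ _i ∈ Finset.range (2*L), m ^ L / (L ! : ℝ) ^ θ :=
            Finset.sum_le_sum (fun i _ => keyle i)
      _ = (2*L : ℕ) * (m ^ L / (L ! : ℝ) ^ θ) := by
          rw [Finset.sum_const, Finset.card_range, nsmul_eq_mul]
    have htailsum : (∑' k : ℕ, m ^ (k + 2*L) / ((k + 2*L)! : ℝ) ^ θ)
        ≤ (m ^ L / (L ! : ℝ) ^ θ) * ∑' k : ℕ, r ^ k := by
      rw [← tsum_mul_left]
      exact Summable.tsum_le_tsum htail ((summable_nat_add_iff (2*L)).mpr hsA)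
        (hgs.mul_left _)
    have hfin : (0:ℝ) ≤ ∑' k : ℕ, r ^ k := tsum_nonneg (fun k => by positivity)
    calc (∑ i ∈ Finset.range (2*L), m ^ i / (i ! : ℝ) ^ θ)
          + (∑' k : ℕ, m ^ (k + 2*L) / ((k + 2*L)! : ℝ) ^ θ)
        ≤ (2*L : ℕ) * (m ^ L / (L ! : ℝ) ^ θ)
          + (m ^ L / (L ! : ℝ) ^ θ) * ∑' k : ℕ, r ^ k := add_le_add hhead htailsum
    _ = (2 * (L:ℝ) + ∑' ℓ : ℕ, r ^ ℓ) * (m ^ L / (L ! : ℝ) ^ θ) := by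
        push_cast; ring
end

section
/- Let ρ > 1, σ ≥ 0, C > 0, and define γ_∅ = 1 and γ_v = (|v|!)^σ ∏_{j∈v} C·j^{-ρ} for nonempty finite v ⊆ ℕ. If ρ ≤ σ, then S(m) = Σ_{v ⊆ ℕ finite} γ_v m^{|v|} diverges for all m ≥ 1/C. -/
theorem pod_power_weights_divergence (ρ σ C : ℝ) (hρ : 1 < ρ) (hσ : 0 ≤ σ)
    (hC : 0 < C) (hρσ : ρ ≤ σ) (m : ℝ) (hm : 1 / C ≤ m) :
    ¬ Summable (fun v : Finset ℕ+ =>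
        (Nat.factorial v.card : ℝ) ^ σ * m ^ v.card * ∏ j ∈ v, C * (j : ℝ) ^ (-ρ)) := by
  intro hs
  set f : Finset ℕ+ → ℝ := fun v =>
    (Nat.factorial v.card : ℝ) ^ σ * m ^ v.card * ∏ j ∈ v, C * (j : ℝ) ^ (-ρ) with hf
  -- the injection ℓ ↦ {1, …, ℓ}
  have hemb : Function.Injective (fun i : ℕ => (⟨i + 1, Nat.succ_pos i⟩ : ℕ+)) := by
    intro a b h
    simpa using congrArg (fun x : ℕ+ => (x : ℕ)) h
  set g : ℕ → Finset ℕ+ := fun ℓ =>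
    (Finset.range ℓ).image (fun i : ℕ => (⟨i + 1, Nat.succ_pos i⟩ : ℕ+)) with hg
  have hcard : ∀ ℓ, (g ℓ).card = ℓ := by
    intro ℓ
    rw [hg]
    exact (Finset.card_image_of_injective _ hemb).trans (Finset.card_range ℓ)
  have hginj : Function.Injective g := by
    intro a b h
    have := congrArg Finset.card h
    rwa [hcard, hcard] at this
  have hCm : 1 ≤ C * m := by
    have := (div_le_iff₀ hC).mp hm
    linarith [this]
  have hone : ∀ ℓ, (1 : ℝ) ≤ f (g ℓ) := by
    intro ℓ
    have hfac1 : (1 : ℝ) ≤ (Nat.factorial ℓ : ℝ) := by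
      exact_mod_cast Nat.one_le_iff_ne_zero.mpr (Nat.factorial_ne_zero ℓ)
    have hfacpos : (0 : ℝ) < (Nat.factorial ℓ : ℝ) := lt_of_lt_of_le one_pos hfac1
    have hprod : (∏ j ∈ g ℓ, C * (j : ℝ) ^ (-ρ))
        = C ^ ℓ * ((Nat.factorial ℓ : ℝ)) ^ (-ρ) := by
      rw [hg]
      beta_reduce
      refine (Finset.prod_image (by intro a _ b _ h; exact hemb h)).trans ?_
      have : ∀ i ∈ Finset.range ℓ,
          C * ((⟨i + 1, Nat.succ_pos i⟩ : ℕ+) : ℝ) ^ (-ρ) = C * ((i + 1 : ℕ) : ℝ) ^ (-ρ) := by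
        intro i _; norm_num
      refine (Finset.prod_congr rfl this).trans ?_
      rw [Finset.prod_mul_distrib, Finset.prod_const, Finset.card_range]
      congr 1
      rw [Real.finset_prod_rpow _ _ (fun i _ => by positivity) (-ρ)]
      congr 1
      exact_mod_cast Finset.prod_range_add_one_eq_factorial ℓ
    have : f (g ℓ) = ((Nat.factorial ℓ : ℝ)) ^ (σ - ρ) * (C * m) ^ ℓ := by
      rw [hf]
      simp only [hcard, hprod]
      rw [Real.rpow_sub hfacpos, Real.rpow_neg (le_of_lt hfacpos), mul_pow]
      field_simp
    rw [this]
    have h1 : (1 : ℝ) ≤ ((Nat.factorial ℓ : ℝ)) ^ (σ - ρ) :=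
      Real.one_le_rpow hfac1 (by linarith)
    have h2 : (1 : ℝ) ≤ (C * m) ^ ℓ := one_le_pow₀ hCm
    nlinarith
  have hsum : Summable (f ∘ g) := hs.comp_injective hginj
  have htend : Filter.Tendsto (f ∘ g) Filter.atTop (nhds 0) := hsum.tendsto_atTop_zero
  have := htend.eventually (eventually_lt_nhds one_pos : ∀ᶠ x in nhds (0:ℝ), x < 1)
  rcases this.exists with ⟨ℓ, hℓ⟩
  exact absurd (hone ℓ) (not_le.mpr hℓ)
end

section
/- Let ρ > σ ≥ 0 with ρ > 1, C > 0, and define γ_∅ = 1 and γ_v = (|v|!)^σ ∏_{j∈v} C·j^{-ρ} for nonempty finite v ⊆ ℕ. Then S(m) = Σ_{v ⊆ ℕ finite} γ_v m^{|v|} is finite for all m > 0, and moreover liminf_{m→∞} m^{-1/(ρ-σ)} log S(m) ≥ (ρ-σ)·C^{1/(ρ-σ)}. -/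
open Filter Finset

lemma log_fact_le : ∀ n : ℕ, 1 ≤ n →
    Real.log (Nat.factorial n) ≤ n * Real.log n - n + 1 + Real.log n := by
  intro n hn
  induction n with
  | zero => omega
  | succ k ih =>
    rcases Nat.eq_or_lt_of_le hn with h1 | h1
    · have : k = 0 := by omega
      subst this; norm_num [Nat.factorial]
    · have hk : 1 ≤ k := by omega
      have hkR : (1:ℝ) ≤ (k:ℝ) := by exact_mod_cast hk
      have hkpos : (0:ℝ) < k := by linarith
      have ihk := ih hk
      have hfact : (Nat.factorial (k+1) : ℝ) = ((k:ℝ)+1) * (Nat.factorial k : ℝ) := by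
        push_cast [Nat.factorial]; ring
      have hlog : Real.log (Nat.factorial (k+1)) =
          Real.log ((k:ℝ)+1) + Real.log (Nat.factorial k) := by
        rw [hfact, Real.log_mul (by positivity) (by positivity)]
      have key : 1 ≤ ((k:ℝ)+1) * (Real.log ((k:ℝ)+1) - Real.log k) := by
        have h2 : Real.log ((k:ℝ)/((k:ℝ)+1)) ≤ (k:ℝ)/((k:ℝ)+1) - 1 :=
          Real.log_le_sub_one_of_pos (by positivity)
        have h3 : Real.log ((k:ℝ)/((k:ℝ)+1)) = Real.log k - Real.log ((k:ℝ)+1) :=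
          Real.log_div (by positivity) (by positivity)
        have h4 : Real.log ((k:ℝ)+1) - Real.log k ≥ 1 - (k:ℝ)/((k:ℝ)+1) := by
          rw [h3] at h2; linarith
        have h5 : 1 - (k:ℝ)/((k:ℝ)+1) = 1/((k:ℝ)+1) := by field_simp; ring
        rw [h5] at h4
        calc (1:ℝ) = ((k:ℝ)+1) * (1/((k:ℝ)+1)) := by field_simp
        _ ≤ ((k:ℝ)+1) * (Real.log ((k:ℝ)+1) - Real.log k) := by
            apply mul_le_mul_of_nonneg_left h4 (by positivity)
      have hcast : ((k+1 : ℕ):ℝ) = (k:ℝ)+1 := by push_cast; ring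
      rw [hlog, hcast]
      nlinarith [Real.log_nonneg hkR, Real.log_nonneg (by linarith : (1:ℝ) ≤ (k:ℝ)+1)]

lemma rpow_tail_ineq (ρ : ℝ) (hρ : 1 < ρ) {x : ℝ} (hx : 1 ≤ x) :
    (x+1) ^ (-ρ) ≤ (x ^ (1-ρ) - (x+1) ^ (1-ρ)) / (ρ-1) := by
  have hx0 : 0 < x := by linarith
  obtain ⟨c, hc, hceq⟩ := exists_hasDerivAt_eq_slope (fun y => y ^ (1-ρ))
    (fun y => (1-ρ) * y ^ (1-ρ-1)) (by linarith : x < x + 1)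
    (by
      apply ContinuousOn.rpow_const continuousOn_id
      intro y hy; left; simp only [id]
      simp only [Set.mem_Icc] at hy; intro h; rw [h] at hy; linarith [hy.1])
    (by
      intro y hy
      exact Real.hasDerivAt_rpow_const (Or.inl (by simp only [Set.mem_Ioo] at hy; nlinarith [hy.1])))
  simp only [Set.mem_Ioo] at hc
  simp only [add_sub_cancel_left, div_one] at hceq
  have hc0 : 0 < c := by linarith [hc.1]
  have hexp : (1:ℝ) - ρ - 1 = -ρ := by norm_num
  rw [hexp] at hceq
  have hcmono : (x+1) ^ (-ρ) ≤ c ^ (-ρ) :=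
    Real.rpow_le_rpow_of_nonpos hc0 (le_of_lt hc.2) (by linarith)
  have hcpos : (0:ℝ) < c ^ (-ρ) := Real.rpow_pos_of_pos hc0 _
  rw [le_div_iff₀ (by linarith : (0:ℝ) < ρ - 1)]
  nlinarith [hceq, hcmono, hcpos]

lemma tail_sum_le (ρ : ℝ) (hρ : 1 < ρ) (n : ℕ) (hn : 1 ≤ n) (W : Finset ℕ+)
    (hW : ∀ j ∈ W, n < (j:ℕ)) :
    ∑ j ∈ W, ((j:ℕ):ℝ) ^ (-ρ) ≤ (n:ℝ) ^ (1-ρ) / (ρ-1) := by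
  classical
  -- move to ℕ
  have hinj : Set.InjOn (fun j : ℕ+ => (j:ℕ)) W := fun a _ b _ h => PNat.coe_injective h
  have hsum : ∑ j ∈ W, ((j:ℕ):ℝ) ^ (-ρ) = ∑ j ∈ W.image (fun j : ℕ+ => (j:ℕ)), (j:ℝ) ^ (-ρ) := by
    rw [Finset.sum_image (fun a ha b hb h => hinj ha hb h)]
  rw [hsum]
  set W' := W.image (fun j : ℕ+ => (j:ℕ)) with hW'
  have hW'mem : ∀ j ∈ W', n < j := by
    intro j hj; simp only [hW', Finset.mem_image] at hj
    obtain ⟨a, ha, rfl⟩ := hj; exact hW a ha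
  set M := W'.sup id with hM
  have hsub : W' ⊆ Finset.Ico (n+1) (M+1) := by
    intro j hj; simp only [Finset.mem_Ico]
    exact ⟨hW'mem j hj, Nat.lt_succ_of_le (Finset.le_sup (f := id) hj)⟩
  have hnonneg : ∀ j ∈ Finset.Ico (n+1) (M+1), (0:ℝ) ≤ (j:ℝ) ^ (-ρ) := by
    intro j hj
    have : 0 < j := by simp [Finset.mem_Ico] at hj; omega
    positivity
  have h1 : ∑ j ∈ W', (j:ℝ) ^ (-ρ) ≤ ∑ j ∈ Finset.Ico (n+1) (M+1), (j:ℝ) ^ (-ρ) :=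
    Finset.sum_le_sum_of_subset_of_nonneg hsub (fun j hj _ => hnonneg j hj)
  -- pointwise bound and telescoping
  have h2 : ∀ j ∈ Finset.Ico (n+1) (M+1), (j:ℝ) ^ (-ρ) ≤
      (((j:ℝ)-1) ^ (1-ρ) - (j:ℝ) ^ (1-ρ)) / (ρ-1) := by
    intro j hj
    simp only [Finset.mem_Ico] at hj
    have hj1 : (1:ℝ) ≤ (j:ℝ) - 1 := by
      have : 2 ≤ j := by omega
      have : (2:ℝ) ≤ (j:ℝ) := by exact_mod_cast this
      linarith
    have := rpow_tail_ineq ρ hρ hj1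
    simpa using this
  have h3 : ∑ j ∈ Finset.Ico (n+1) (M+1), (j:ℝ) ^ (-ρ) ≤
      ∑ j ∈ Finset.Ico (n+1) (M+1), (((j:ℝ)-1) ^ (1-ρ) - (j:ℝ) ^ (1-ρ)) / (ρ-1) :=
    Finset.sum_le_sum h2
  -- telescope
  have h4 : ∑ j ∈ Finset.Ico (n+1) (M+1), (((j:ℝ)-1) ^ (1-ρ) - (j:ℝ) ^ (1-ρ))
      = ∑ i ∈ Finset.range (M+1-(n+1)), ((((n+1+i:ℕ):ℝ)-1) ^ (1-ρ) - ((n+1+i:ℕ):ℝ) ^ (1-ρ)) := by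
    rw [Finset.sum_Ico_eq_sum_range]
  have h5 : ∑ i ∈ Finset.range (M+1-(n+1)), ((((n+1+i:ℕ):ℝ)-1) ^ (1-ρ) - ((n+1+i:ℕ):ℝ) ^ (1-ρ))
      = ((n:ℝ)) ^ (1-ρ) - (((n + (M+1-(n+1)) :ℕ)):ℝ) ^ (1-ρ) := by
    have := Finset.sum_range_sub' (fun i => ((n+i:ℕ):ℝ) ^ (1-ρ)) (M+1-(n+1))
    simp only [Nat.add_zero] at this
    rw [← this]
    apply Finset.sum_congr rfl
    intro i _
    congr 1
    · congr 1; push_cast; ring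
    · congr 1; push_cast; ring
  have h6 : (0:ℝ) ≤ (((n + (M+1-(n+1)) :ℕ)):ℝ) ^ (1-ρ) := by positivity
  have hsumdiv : ∑ j ∈ Finset.Ico (n+1) (M+1), (((j:ℝ)-1) ^ (1-ρ) - (j:ℝ) ^ (1-ρ)) / (ρ-1)
      = (∑ j ∈ Finset.Ico (n+1) (M+1), (((j:ℝ)-1) ^ (1-ρ) - (j:ℝ) ^ (1-ρ))) / (ρ-1) := by
    rw [Finset.sum_div]
  calc ∑ j ∈ W', (j:ℝ) ^ (-ρ) ≤ _ := h1
  _ ≤ _ := h3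
  _ = ((n:ℝ) ^ (1-ρ) - (((n + (M+1-(n+1)) :ℕ)):ℝ) ^ (1-ρ)) / (ρ-1) := by
      rw [hsumdiv, h4, h5]
  _ ≤ (n:ℝ) ^ (1-ρ) / (ρ-1) := by
      apply div_le_div_of_nonneg_right _ (by linarith)
      linarith [h6]

def Vn (n : ℕ) : Finset ℕ+ := (Finset.range n).image (fun i => Nat.succPNat i)

lemma Vn_inj : Function.Injective (fun i : ℕ => (⟨i+1, i.succ_pos⟩ : ℕ+)) := by
  intro a b h
  have := congrArg (fun p : ℕ+ => (p:ℕ)) h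
  simpa using this

lemma Vn_card (n : ℕ) : (Vn n).card = n := by
  rw [Vn, Finset.card_image_of_injective (f := Nat.succPNat) _ Vn_inj, Finset.card_range]

lemma Vn_mem (n : ℕ) (j : ℕ+) : j ∈ Vn n ↔ (j:ℕ) ≤ n := by
  simp only [Vn, Finset.mem_image, Finset.mem_range]
  constructor
  · rintro ⟨i, hi, rfl⟩; simpa using hi
  · intro h
    have hp := j.pos
    refine ⟨(j:ℕ)-1, by omega, ?_⟩
    apply PNat.coe_injective
    simp
    omega

lemma Vn_prod (n : ℕ) : ∏ j ∈ Vn n, ((j:ℕ):ℝ) = (Nat.factorial n : ℝ) := by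
  have h := Finset.prod_image (s := Finset.range n)
    (g := Nat.succPNat) (f := fun j : ℕ+ => ((j:ℕ):ℝ))
    (fun a _ b _ hab => Vn_inj hab)
  rw [Vn, h]
  have : ∏ i ∈ Finset.range n, (((i+1:ℕ)):ℝ) = ((Nat.factorial n : ℕ):ℝ) := by
    rw_mod_cast [Finset.prod_range_add_one_eq_factorial]
  simpa using this

lemma Vn_prod_rpow (n : ℕ) (r : ℝ) :
    ∏ j ∈ Vn n, ((j:ℕ):ℝ) ^ r = (Nat.factorial n : ℝ) ^ r := by
  rw [Real.finset_prod_rpow _ _ (fun i _ => by positivity), Vn_prod]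

lemma fiber_bound (ρ σ C m : ℝ) (hρ : 1 < ρ) (hσ : 0 ≤ σ) (hC : 0 < C) (hm : 0 < m)
    (n : ℕ) (hn : 1 ≤ n) (G : Finset (Finset ℕ+)) (hG : ∀ v ∈ G, v.card = n) :
    ∑ v ∈ G, ((Nat.factorial v.card : ℝ) ^ σ * m ^ v.card * ∏ j ∈ v, C * ((j:ℕ):ℝ) ^ (-ρ))
      ≤ (Nat.factorial n : ℝ) ^ (σ-ρ) * (2*m*C*Real.exp (1/(ρ-1))) ^ n := by
  classical
  have hnR : (0:ℝ) < (n:ℝ) := by exact_mod_cast hn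
  set t : ℝ := (n:ℝ) ^ ρ with ht
  have htpos : 0 < t := Real.rpow_pos_of_pos hnR ρ
  -- rewrite terms
  have hterm : ∀ v ∈ G, (Nat.factorial v.card : ℝ) ^ σ * m ^ v.card * ∏ j ∈ v, C * ((j:ℕ):ℝ) ^ (-ρ)
      = (Nat.factorial n : ℝ) ^ σ * (m*C) ^ n * ∏ j ∈ v, ((j:ℕ):ℝ) ^ (-ρ) := by
    intro v hv
    rw [hG v hv] at *
    have : ∏ j ∈ v, C * ((j:ℕ):ℝ) ^ (-ρ) = C ^ v.card * ∏ j ∈ v, ((j:ℕ):ℝ) ^ (-ρ) := by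
      rw [Finset.prod_mul_distrib, Finset.prod_const]
    rw [this, hG v hv, mul_pow]
    ring
  rw [Finset.sum_congr rfl hterm, ← Finset.mul_sum]
  -- key bound on ∑ P v
  have key : ∑ v ∈ G, ∏ j ∈ v, ((j:ℕ):ℝ) ^ (-ρ)
      ≤ 2 ^ n * (Nat.factorial n : ℝ) ^ (-ρ) * Real.exp ((n:ℝ)/(ρ-1)) := by
    set U : Finset ℕ+ := G.sup id ∪ Vn n with hU
    have hsubU : ∀ v ∈ G, v ⊆ U := fun v hv =>
      Finset.Subset.trans (Finset.le_sup (f := id) hv) Finset.subset_union_left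
    have hQ : ∀ v ∈ G, t ^ n * ∏ j ∈ v, ((j:ℕ):ℝ) ^ (-ρ) = ∏ j ∈ v, (t * ((j:ℕ):ℝ) ^ (-ρ)) := by
      intro v hv
      rw [Finset.prod_mul_distrib, Finset.prod_const, hG v hv]
    have h1 : t ^ n * ∑ v ∈ G, ∏ j ∈ v, ((j:ℕ):ℝ) ^ (-ρ)
        = ∑ v ∈ G, ∏ j ∈ v, (t * ((j:ℕ):ℝ) ^ (-ρ)) := by
      rw [Finset.mul_sum]; exact Finset.sum_congr rfl hQ
    have h2 : ∑ v ∈ G, ∏ j ∈ v, (t * ((j:ℕ):ℝ) ^ (-ρ))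
        ≤ ∑ v ∈ U.powerset, ∏ j ∈ v, (t * ((j:ℕ):ℝ) ^ (-ρ)) := by
      apply Finset.sum_le_sum_of_subset_of_nonneg
      · intro v hv; rw [Finset.mem_powerset]; exact hsubU v hv
      · intro v _ _; apply Finset.prod_nonneg; intro j _; positivity
    have h3 : ∑ v ∈ U.powerset, ∏ j ∈ v, (t * ((j:ℕ):ℝ) ^ (-ρ))
        = ∏ j ∈ U, (t * ((j:ℕ):ℝ) ^ (-ρ) + 1) := by
      rw [Finset.prod_add]
      apply Finset.sum_congr rfl
      intro v _
      simp
    have hVnU : Vn n ⊆ U := Finset.subset_union_right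
    have h4 : ∏ j ∈ U, (t * ((j:ℕ):ℝ) ^ (-ρ) + 1)
        = (∏ j ∈ U \ Vn n, (t * ((j:ℕ):ℝ) ^ (-ρ) + 1)) * ∏ j ∈ Vn n, (t * ((j:ℕ):ℝ) ^ (-ρ) + 1) :=
      (Finset.prod_sdiff hVnU).symm
    have h5 : ∏ j ∈ Vn n, (t * ((j:ℕ):ℝ) ^ (-ρ) + 1) ≤ ∏ j ∈ Vn n, (2 * t * ((j:ℕ):ℝ) ^ (-ρ)) := by
      apply Finset.prod_le_prod
      · intro j _; positivity
      · intro j hj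
        have hjn : ((j:ℕ):ℝ) ≤ (n:ℝ) := by exact_mod_cast (Vn_mem n j).mp hj
        have hjpos : (0:ℝ) < ((j:ℕ):ℝ) := by exact_mod_cast j.pos
        have h1t : 1 ≤ t * ((j:ℕ):ℝ) ^ (-ρ) := by
          rw [Real.rpow_neg (le_of_lt hjpos), ← div_eq_mul_inv, le_div_iff₀ (Real.rpow_pos_of_pos hjpos ρ), one_mul]
          exact Real.rpow_le_rpow (le_of_lt hjpos) hjn (by linarith)
        linarith
    have h6 : ∏ j ∈ Vn n, (2 * t * ((j:ℕ):ℝ) ^ (-ρ)) = 2 ^ n * t ^ n * (Nat.factorial n : ℝ) ^ (-ρ) := by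
      rw [Finset.prod_mul_distrib, Finset.prod_const, Vn_card, Vn_prod_rpow, mul_pow]
    have h7 : ∏ j ∈ U \ Vn n, (t * ((j:ℕ):ℝ) ^ (-ρ) + 1) ≤ Real.exp ((n:ℝ)/(ρ-1)) := by
      have hp1 : ∏ j ∈ U \ Vn n, (t * ((j:ℕ):ℝ) ^ (-ρ) + 1)
          ≤ ∏ j ∈ U \ Vn n, Real.exp (t * ((j:ℕ):ℝ) ^ (-ρ)) := by
        apply Finset.prod_le_prod
        · intro j _; positivity
        · intro j _; exact Real.add_one_le_exp _
      have hp2 : ∏ j ∈ U \ Vn n, Real.exp (t * ((j:ℕ):ℝ) ^ (-ρ))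
          = Real.exp (∑ j ∈ U \ Vn n, t * ((j:ℕ):ℝ) ^ (-ρ)) := (Real.exp_sum _ _).symm
      have hp3 : ∑ j ∈ U \ Vn n, t * ((j:ℕ):ℝ) ^ (-ρ) = t * ∑ j ∈ U \ Vn n, ((j:ℕ):ℝ) ^ (-ρ) := by
        rw [Finset.mul_sum]
      have hp4 : ∑ j ∈ U \ Vn n, ((j:ℕ):ℝ) ^ (-ρ) ≤ (n:ℝ) ^ (1-ρ) / (ρ-1) := by
        apply tail_sum_le ρ hρ n hn
        intro j hj
        rw [Finset.mem_sdiff] at hj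
        have := hj.2
        rw [Vn_mem] at this
        omega
      have hp5 : t * ((n:ℝ) ^ (1-ρ) / (ρ-1)) = (n:ℝ)/(ρ-1) := by
        rw [ht, ← mul_div_assoc, ← Real.rpow_add hnR]
        norm_num
      calc ∏ j ∈ U \ Vn n, (t * ((j:ℕ):ℝ) ^ (-ρ) + 1) ≤ _ := hp1
      _ = _ := hp2
      _ ≤ Real.exp ((n:ℝ)/(ρ-1)) := by
          rw [Real.exp_le_exp, hp3]
          calc t * ∑ j ∈ U \ Vn n, ((j:ℕ):ℝ) ^ (-ρ) ≤ t * ((n:ℝ) ^ (1-ρ) / (ρ-1)) := by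
                apply mul_le_mul_of_nonneg_left hp4 (le_of_lt htpos)
          _ = _ := hp5
    -- assemble key
    have hfacneg : (0:ℝ) < (Nat.factorial n : ℝ) ^ (-ρ) := by
      apply Real.rpow_pos_of_pos; exact_mod_cast Nat.factorial_pos n
    have hchain : t ^ n * ∑ v ∈ G, ∏ j ∈ v, ((j:ℕ):ℝ) ^ (-ρ)
        ≤ Real.exp ((n:ℝ)/(ρ-1)) * (2 ^ n * t ^ n * (Nat.factorial n : ℝ) ^ (-ρ)) := by
      rw [h1]
      calc ∑ v ∈ G, ∏ j ∈ v, (t * ((j:ℕ):ℝ) ^ (-ρ)) ≤ _ := h2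
      _ = _ := h3
      _ = _ := h4
      _ ≤ Real.exp ((n:ℝ)/(ρ-1)) * (2 ^ n * t ^ n * (Nat.factorial n : ℝ) ^ (-ρ)) := by
          rw [← h6]
          apply mul_le_mul h7 h5
          · apply Finset.prod_nonneg; intro j _; positivity
          · positivity
    apply le_of_mul_le_mul_left _ (pow_pos htpos n)
    calc t ^ n * ∑ v ∈ G, ∏ j ∈ v, ((j:ℕ):ℝ) ^ (-ρ)
          ≤ Real.exp ((n:ℝ)/(ρ-1)) * (2 ^ n * t ^ n * (Nat.factorial n : ℝ) ^ (-ρ)) := hchain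
      _ = t ^ n * (2 ^ n * (Nat.factorial n : ℝ) ^ (-ρ) * Real.exp ((n:ℝ)/(ρ-1))) := by ring
  -- final assembly
  have hfacpos : (0:ℝ) < (Nat.factorial n : ℝ) := by exact_mod_cast Nat.factorial_pos n
  calc (Nat.factorial n : ℝ) ^ σ * (m*C) ^ n * ∑ v ∈ G, ∏ j ∈ v, ((j:ℕ):ℝ) ^ (-ρ)
      ≤ (Nat.factorial n : ℝ) ^ σ * (m*C) ^ n * (2 ^ n * (Nat.factorial n : ℝ) ^ (-ρ) * Real.exp ((n:ℝ)/(ρ-1))) := by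
        apply mul_le_mul_of_nonneg_left key (by positivity)
  _ = (Nat.factorial n : ℝ) ^ (σ-ρ) * (2*m*C*Real.exp (1/(ρ-1))) ^ n := by
      rw [show σ - ρ = σ + (-ρ) by ring, Real.rpow_add hfacpos]
      rw [show ((n:ℝ)/(ρ-1)) = (n:ℕ) * (1/(ρ-1)) by push_cast; ring, Real.exp_nat_mul]
      rw [show (2*m*C*Real.exp (1/(ρ-1))) = (2*(m*C))*Real.exp (1/(ρ-1)) by ring, mul_pow, mul_pow]
      ring

lemma b_summable (ρ σ r : ℝ) (hρσ : σ < ρ) (hr : 0 < r) :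
    Summable (fun n : ℕ => (Nat.factorial n : ℝ) ^ (σ-ρ) * r ^ n) := by
  set b : ℕ → ℝ := fun n => (Nat.factorial n : ℝ) ^ (σ-ρ) * r ^ n with hb
  have hbpos : ∀ n, 0 < b n := by
    intro n
    have : (0:ℝ) < (Nat.factorial n : ℝ) := by exact_mod_cast Nat.factorial_pos n
    positivity
  have hbsucc : ∀ n : ℕ, b (n+1) = ((n+1:ℕ):ℝ) ^ (σ-ρ) * r * b n := by
    intro n
    have hfp : (0:ℝ) < (Nat.factorial n : ℝ) := by exact_mod_cast Nat.factorial_pos n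
    have hnp : (0:ℝ) < ((n+1:ℕ):ℝ) := by positivity
    simp only [hb]
    rw [Nat.factorial_succ, pow_succ]
    push_cast
    rw [Real.mul_rpow (by positivity) (by positivity)]
    ring
  apply summable_of_ratio_norm_eventually_le (r := 1/2) (by norm_num)
  have htend : Filter.Tendsto (fun n : ℕ => ((n+1:ℕ):ℝ) ^ (σ-ρ) * r) Filter.atTop (nhds 0) := by
    have h0 : Filter.Tendsto (fun x : ℝ => x ^ (-(ρ-σ))) Filter.atTop (nhds 0) :=
      tendsto_rpow_neg_atTop (by linarith)
    have h1 : Filter.Tendsto (fun n : ℕ => ((n+1:ℕ):ℝ)) Filter.atTop Filter.atTop :=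
      tendsto_natCast_atTop_atTop.comp (Filter.tendsto_add_atTop_nat 1)
    have := (h0.comp h1).mul_const r
    simpa [Function.comp, show -(ρ-σ) = σ-ρ by ring] using this
  have hev : ∀ᶠ n : ℕ in Filter.atTop, ((n+1:ℕ):ℝ) ^ (σ-ρ) * r ≤ 1/2 := by
    exact htend.eventually_le_const (by norm_num)
  filter_upwards [hev] with n hn
  rw [Real.norm_of_nonneg (le_of_lt (hbpos _)), Real.norm_of_nonneg (le_of_lt (hbpos n)), hbsucc]
  apply mul_le_mul_of_nonneg_right hn (le_of_lt (hbpos n))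

lemma pod_partial_sum_le (ρ σ C m : ℝ) (hρ : 1 < ρ) (hσ : 0 ≤ σ) (hρσ : σ < ρ) (hC : 0 < C)
    (hm : 0 < m) (F : Finset (Finset ℕ+)) :
    ∑ v ∈ F, ((Nat.factorial v.card : ℝ) ^ σ * m ^ v.card * ∏ j ∈ v, C * ((j:ℕ):ℝ) ^ (-ρ))
      ≤ ∑' n : ℕ, (Nat.factorial n : ℝ) ^ (σ-ρ) * (2*m*C*Real.exp (1/(ρ-1))) ^ n := by
  classical
  set r : ℝ := 2*m*C*Real.exp (1/(ρ-1)) with hr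
  have hrpos : 0 < r := by positivity
  set b : ℕ → ℝ := fun n => (Nat.factorial n : ℝ) ^ (σ-ρ) * r ^ n with hb
  have hbpos : ∀ n, 0 < b n := by
    intro n
    have : (0:ℝ) < (Nat.factorial n : ℝ) := by exact_mod_cast Nat.factorial_pos n
    positivity
  have hbsum : Summable b := b_summable ρ σ r hρσ hrpos
  rw [← Finset.sum_fiberwise_of_maps_to (g := Finset.card) (t := F.image Finset.card)
    (fun v hv => Finset.mem_image_of_mem _ hv)]
  have hfiber : ∀ n ∈ F.image Finset.card,
      ∑ v ∈ F.filter (fun v => v.card = n),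
        ((Nat.factorial v.card : ℝ) ^ σ * m ^ v.card * ∏ j ∈ v, C * ((j:ℕ):ℝ) ^ (-ρ)) ≤ b n := by
    intro n _
    rcases Nat.eq_zero_or_pos n with rfl | hn
    · have hsub : F.filter (fun v => v.card = 0) ⊆ {(∅ : Finset ℕ+)} := by
        intro v hv
        simp only [Finset.mem_filter, Finset.card_eq_zero] at hv
        simp [hv.2]
      calc ∑ v ∈ F.filter (fun v => v.card = 0),
            ((Nat.factorial v.card : ℝ) ^ σ * m ^ v.card * ∏ j ∈ v, C * ((j:ℕ):ℝ) ^ (-ρ))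
          ≤ ∑ v ∈ ({(∅ : Finset ℕ+)} : Finset (Finset ℕ+)),
            ((Nat.factorial v.card : ℝ) ^ σ * m ^ v.card * ∏ j ∈ v, C * ((j:ℕ):ℝ) ^ (-ρ)) := by
            apply Finset.sum_le_sum_of_subset_of_nonneg hsub
            intro v _ _
            have h1 : (0:ℝ) ≤ ∏ j ∈ v, C * ((j:ℕ):ℝ) ^ (-ρ) :=
              Finset.prod_nonneg (fun j _ => by positivity)
            positivity
      _ = 1 := by simp
      _ ≤ b 0 := by simp [hb]
    · calc ∑ v ∈ F.filter (fun v => v.card = n),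
            ((Nat.factorial v.card : ℝ) ^ σ * m ^ v.card * ∏ j ∈ v, C * ((j:ℕ):ℝ) ^ (-ρ))
          ≤ (Nat.factorial n : ℝ) ^ (σ-ρ) * r ^ n := by
            apply fiber_bound ρ σ C m hρ hσ hC hm n hn
            intro v hv
            exact (Finset.mem_filter.mp hv).2
      _ = b n := rfl
  calc ∑ n ∈ F.image Finset.card, ∑ v ∈ F.filter (fun v => v.card = n),
        ((Nat.factorial v.card : ℝ) ^ σ * m ^ v.card * ∏ j ∈ v, C * ((j:ℕ):ℝ) ^ (-ρ))
      ≤ ∑ n ∈ F.image Finset.card, b n := Finset.sum_le_sum hfiber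
  _ ≤ ∑' n, b n := Summable.sum_le_tsum _ (fun n _ => (hbpos n).le) hbsum

lemma pod_nonneg (ρ σ C m : ℝ) (hC : 0 < C) (hm : 0 < m) (v : Finset ℕ+) :
    0 ≤ (Nat.factorial v.card : ℝ) ^ σ * m ^ v.card * ∏ j ∈ v, C * ((j:ℕ):ℝ) ^ (-ρ) := by
  have h0 : (0:ℝ) < (Nat.factorial v.card : ℝ) := by exact_mod_cast Nat.factorial_pos v.card
  have h1 : (0:ℝ) ≤ ∏ j ∈ v, C * ((j:ℕ):ℝ) ^ (-ρ) :=
    Finset.prod_nonneg (fun j _ => by positivity)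
  positivity

lemma summable_pod (ρ σ C m : ℝ) (hρ : 1 < ρ) (hσ : 0 ≤ σ) (hρσ : σ < ρ) (hC : 0 < C)
    (hm : 0 < m) :
    Summable (fun v : Finset ℕ+ =>
      (Nat.factorial v.card : ℝ) ^ σ * m ^ v.card * ∏ j ∈ v, C * ((j:ℕ):ℝ) ^ (-ρ)) :=
  summable_of_sum_le (fun v => pod_nonneg ρ σ C m hC hm v)
    (pod_partial_sum_le ρ σ C m hρ hσ hρσ hC hm)

lemma tsum_pod_le (ρ σ C m : ℝ) (hρ : 1 < ρ) (hσ : 0 ≤ σ) (hρσ : σ < ρ) (hC : 0 < C)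
    (hm : 0 < m) :
    ∑' v : Finset ℕ+, ((Nat.factorial v.card : ℝ) ^ σ * m ^ v.card * ∏ j ∈ v, C * ((j:ℕ):ℝ) ^ (-ρ))
      ≤ ∑' n : ℕ, (Nat.factorial n : ℝ) ^ (σ-ρ) * (2*m*C*Real.exp (1/(ρ-1))) ^ n :=
  Summable.tsum_le_of_sum_le (summable_pod ρ σ C m hρ hσ hρσ hC hm)
    (pod_partial_sum_le ρ σ C m hρ hσ hρσ hC hm)

lemma b_tsum_le (ρ σ r : ℝ) (hρσ : σ < ρ) (hr : 0 < r)
    (hbsum : Summable (fun n => (Nat.factorial n : ℝ) ^ (σ-ρ) * r ^ n)) :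
    ∑' n : ℕ, (Nat.factorial n : ℝ) ^ (σ-ρ) * r ^ n
      ≤ 2 * Real.exp ((ρ-σ) * (2*r) ^ (1/(ρ-σ))) := by
  set ε : ℝ := ρ - σ with hε
  have hεpos : 0 < ε := by simp [hε]; linarith
  set y : ℝ := (2*r) ^ (1/ε) with hy
  have hypos : 0 < y := Real.rpow_pos_of_pos (by linarith) _
  have hkey : ∀ n : ℕ, (Nat.factorial n : ℝ) ^ (σ-ρ) * r ^ n ≤ Real.exp (ε * y) * (1/2) ^ n := by
    intro n
    have hfp : (0:ℝ) < (Nat.factorial n : ℝ) := by exact_mod_cast Nat.factorial_pos n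
    -- y^n ≤ n! * exp y
    have h1 : y ^ n ≤ (Nat.factorial n : ℝ) * Real.exp y := by
      have h2 : y ^ n / (Nat.factorial n : ℝ) ≤ Real.exp y := by
        calc y ^ n / (Nat.factorial n : ℝ)
            ≤ ∑ i ∈ Finset.range (n+1), y ^ i / (Nat.factorial i : ℝ) := by
              apply Finset.single_le_sum (f := fun i => y ^ i / (Nat.factorial i : ℝ))
              · intro i _
                have : (0:ℝ) < (Nat.factorial i : ℝ) := by exact_mod_cast Nat.factorial_pos i
                positivity
              · simp
        _ ≤ Real.exp y := Real.sum_le_exp_of_nonneg (le_of_lt hypos) (n+1)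
      rw [div_le_iff₀ hfp] at h2
      linarith [h2]
    -- raise to ε
    have h3 : (2*r) ^ n ≤ (Nat.factorial n : ℝ) ^ ε * Real.exp (ε * y) := by
      have h4 := Real.rpow_le_rpow (by positivity) h1 (le_of_lt hεpos)
      have h5 : (y ^ n) ^ ε = (2*r) ^ n := by
        rw [← Real.rpow_natCast y n, ← Real.rpow_mul (le_of_lt hypos),
          mul_comm (n:ℝ) ε, Real.rpow_mul (le_of_lt hypos), hy,
          ← Real.rpow_mul (by linarith : (0:ℝ) ≤ 2*r)]
        rw [one_div, inv_mul_cancel₀ (ne_of_gt hεpos), Real.rpow_one, Real.rpow_natCast]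
      have h6 : ((Nat.factorial n : ℝ) * Real.exp y) ^ ε
          = (Nat.factorial n : ℝ) ^ ε * Real.exp (ε * y) := by
        rw [Real.mul_rpow (le_of_lt hfp) (le_of_lt (Real.exp_pos y))]
        congr 1
        rw [Real.rpow_def_of_pos (Real.exp_pos y), Real.log_exp, mul_comm]
      rw [h5, h6] at h4
      exact h4
    have h7 : r ^ n = (2*r) ^ n * (1/2) ^ n := by
      rw [← mul_pow]; ring_nf
    have h8 : (Nat.factorial n : ℝ) ^ (σ-ρ) = ((Nat.factorial n : ℝ) ^ ε)⁻¹ := by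
      rw [show σ - ρ = -ε by simp [hε], Real.rpow_neg (le_of_lt hfp)]
    rw [h7, h8]
    have hfε : (0:ℝ) < (Nat.factorial n : ℝ) ^ ε := Real.rpow_pos_of_pos hfp ε
    calc ((Nat.factorial n : ℝ) ^ ε)⁻¹ * ((2*r) ^ n * (1/2) ^ n)
        ≤ ((Nat.factorial n : ℝ) ^ ε)⁻¹ * (((Nat.factorial n : ℝ) ^ ε * Real.exp (ε * y)) * (1/2) ^ n) := by
          apply mul_le_mul_of_nonneg_left _ (by positivity)
          apply mul_le_mul_of_nonneg_right h3 (by positivity)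
    _ = Real.exp (ε * y) * (1/2) ^ n := by
        field_simp
  calc ∑' n : ℕ, (Nat.factorial n : ℝ) ^ (σ-ρ) * r ^ n
      ≤ ∑' n : ℕ, Real.exp (ε * y) * (1/2) ^ n := by
        apply Summable.tsum_le_tsum hkey hbsum
        exact (summable_geometric_of_lt_one (by norm_num) (by norm_num)).mul_left _
  _ = Real.exp (ε * y) * 2 := by
      rw [tsum_mul_left, tsum_geometric_two]
  _ = 2 * Real.exp ((ρ-σ) * (2*r) ^ (1/(ρ-σ))) := by
      rw [mul_comm]

theorem pod_power_weights_finite_and_liminf (ρ σ C : ℝ) (hρ : 1 < ρ) (hσ : 0 ≤ σ)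
    (hρσ : σ < ρ) (hC : 0 < C) :
    (∀ m : ℝ, 0 < m →
      Summable (fun v : Finset ℕ+ =>
        (Nat.factorial v.card : ℝ) ^ σ * m ^ v.card * ∏ j ∈ v, C * (j : ℝ) ^ (-ρ))) ∧
    (ρ - σ) * C ^ (1 / (ρ - σ)) ≤
      liminf (fun m : ℝ =>
        m ^ (-(1 / (ρ - σ))) *
          Real.log (∑' v : Finset ℕ+,
            (Nat.factorial v.card : ℝ) ^ σ * m ^ v.card * ∏ j ∈ v, C * (j : ℝ) ^ (-ρ)))
        atTop := by
  have hεpos : (0:ℝ) < ρ - σ := by linarith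
  constructor
  · intro m hm
    exact summable_pod ρ σ C m hρ hσ hρσ hC hm
  · set α : ℝ := 1 / (ρ - σ) with hαdef
    have hαpos : 0 < α := by rw [hαdef]; positivity
    set S : ℝ → ℝ := fun m => ∑' v : Finset ℕ+,
      ((Nat.factorial v.card : ℝ) ^ σ * m ^ v.card * ∏ j ∈ v, C * ((j:ℕ):ℝ) ^ (-ρ)) with hSdef
    show (ρ - σ) * C ^ α ≤ liminf (fun m : ℝ => m ^ (-α) * Real.log (S m)) atTop
    set N : ℝ → ℝ := fun m => ((⌊(m*C) ^ α⌋₊ : ℕ) : ℝ) with hNdef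
    set φ : ℝ → ℝ := fun m => (ρ-σ) * (m ^ (-α) * (N m - 1 - Real.log (N m))) with hφdef
    have hB : Tendsto (fun m : ℝ => m ^ (-α)) atTop (nhds 0) := tendsto_rpow_neg_atTop hαpos
    -- limit of m^(-α) * N m
    have hid : ∀ m : ℝ, 0 < m → m ^ (-α) * (m*C) ^ α = C ^ α := by
      intro m hm
      rw [Real.mul_rpow (le_of_lt hm) (le_of_lt hC), ← mul_assoc, ← Real.rpow_add hm,
        neg_add_cancel, Real.rpow_zero, one_mul]
    have hA : Tendsto (fun m : ℝ => m ^ (-α) * N m) atTop (nhds (C ^ α)) := by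
      apply tendsto_of_tendsto_of_tendsto_of_le_of_le'
        (g := fun m : ℝ => C ^ α - m ^ (-α)) (h := fun _ : ℝ => C ^ α)
      · simpa using tendsto_const_nhds.sub hB
      · exact tendsto_const_nhds
      · filter_upwards [eventually_gt_atTop (0:ℝ)] with m hm
        have h1 : (m*C) ^ α - 1 ≤ N m := le_of_lt (Nat.sub_one_lt_floor _)
        have h2 := mul_le_mul_of_nonneg_left h1 (le_of_lt (Real.rpow_pos_of_pos hm (-α)))
        calc C ^ α - m ^ (-α) = m ^ (-α) * ((m*C) ^ α - 1) := by
              rw [mul_sub, hid m hm]; ring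
        _ ≤ m ^ (-α) * N m := h2
      · filter_upwards [eventually_gt_atTop (0:ℝ)] with m hm
        have h1 : N m ≤ (m*C) ^ α := Nat.floor_le (by positivity)
        calc m ^ (-α) * N m ≤ m ^ (-α) * (m*C) ^ α :=
              mul_le_mul_of_nonneg_left h1 (le_of_lt (Real.rpow_pos_of_pos hm (-α)))
        _ = C ^ α := hid m hm
    -- eventual facts
    have hev : ∀ᶠ m : ℝ in atTop, (1:ℝ) ≤ m ∧ (1:ℝ) ≤ m * C := by
      filter_upwards [eventually_ge_atTop (max 1 (1/C))] with m hm
      have hm1 : (1:ℝ) ≤ m := le_trans (le_max_left _ _) hm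
      have hmC : (1:ℝ) ≤ m * C := by
        have h1 : 1/C ≤ m := le_trans (le_max_right _ _) hm
        calc (1:ℝ) = (1/C) * C := by field_simp
        _ ≤ m * C := mul_le_mul_of_nonneg_right h1 (le_of_lt hC)
      exact ⟨hm1, hmC⟩
    -- limit of m^(-α) * log (N m)
    have hD : Tendsto (fun m : ℝ => m ^ (-α) * Real.log (N m)) atTop (nhds 0) := by
      apply squeeze_zero' (g := fun m : ℝ => (2 * C ^ (α/2)) * m ^ (-(α/2)))
      · filter_upwards [hev] with m hm
        obtain ⟨hm1, hmC⟩ := hm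
        have hm0 : (0:ℝ) < m := by linarith
        have h1 : (1:ℝ) ≤ (m*C) ^ α := Real.one_le_rpow hmC (le_of_lt hαpos)
        have h2 : (1:ℕ) ≤ ⌊(m*C) ^ α⌋₊ := Nat.le_floor (by exact_mod_cast h1)
        have h3 : (1:ℝ) ≤ N m := by simp only [hNdef]; exact_mod_cast h2
        have h4 : 0 ≤ Real.log (N m) := Real.log_nonneg h3
        have h5 : (0:ℝ) ≤ m ^ (-α) := Real.rpow_nonneg (le_of_lt hm0) _
        positivity
      · filter_upwards [hev] with m hm
        obtain ⟨hm1, hmC⟩ := hm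
        have hm0 : (0:ℝ) < m := by linarith
        have hN0 : (0:ℝ) ≤ N m := by positivity
        have hNub : N m ≤ (m*C) ^ α := Nat.floor_le (by positivity)
        have h1 : Real.log (N m) ≤ (N m) ^ ((1:ℝ)/2) / (1/2) :=
          Real.log_le_rpow_div hN0 (by norm_num)
        have h2 : (N m) ^ ((1:ℝ)/2) ≤ ((m*C) ^ α) ^ ((1:ℝ)/2) :=
          Real.rpow_le_rpow hN0 hNub (by norm_num)
        have h3 : ((m*C) ^ α) ^ ((1:ℝ)/2) = m ^ (α/2) * C ^ (α/2) := by
          rw [← Real.rpow_mul (by positivity : (0:ℝ) ≤ m*C),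
            show α * (1/2) = α/2 by ring,
            Real.mul_rpow (le_of_lt hm0) (le_of_lt hC)]
        have h4 : Real.log (N m) ≤ 2 * (m ^ (α/2) * C ^ (α/2)) := by
          rw [h3] at h2; norm_num at h1; linarith
        have h5 : m ^ (-α) * Real.log (N m) ≤ m ^ (-α) * (2 * (m ^ (α/2) * C ^ (α/2))) :=
          mul_le_mul_of_nonneg_left h4 (Real.rpow_nonneg (le_of_lt hm0) _)
        calc m ^ (-α) * Real.log (N m) ≤ m ^ (-α) * (2 * (m ^ (α/2) * C ^ (α/2))) := h5
        _ = (2 * C ^ (α/2)) * (m ^ (-α) * m ^ (α/2)) := by ring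
        _ = (2 * C ^ (α/2)) * m ^ (-(α/2)) := by
            rw [← Real.rpow_add hm0, show -α + α/2 = -(α/2) by ring]
      · have := (tendsto_rpow_neg_atTop (by positivity : (0:ℝ) < α/2)).const_mul (2 * C ^ (α/2))
        simpa using this
    -- limit of φ
    have hφ : Tendsto φ atTop (nhds ((ρ-σ) * C ^ α)) := by
      have h1 := ((hA.sub hB).sub hD).const_mul (ρ-σ)
      have h2 : Tendsto (fun m : ℝ => (ρ-σ) * ((m ^ (-α) * N m - m ^ (-α)) - m ^ (-α) * Real.log (N m)))
          atTop (nhds ((ρ-σ) * C ^ α)) := by simpa using h1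
      exact h2.congr (fun m => by simp only [hφdef]; ring)
    -- eventual lower bound φ ≤ h
    have hlow : ∀ᶠ m : ℝ in atTop, φ m ≤ m ^ (-α) * Real.log (S m) := by
      filter_upwards [hev] with m hm
      obtain ⟨hm1, hmC⟩ := hm
      have hm0 : (0:ℝ) < m := by linarith
      have hmC0 : (0:ℝ) < m * C := by linarith
      set n : ℕ := ⌊(m*C) ^ α⌋₊ with hndef
      have h1 : (1:ℝ) ≤ (m*C) ^ α := Real.one_le_rpow hmC (le_of_lt hαpos)
      have hn1 : 1 ≤ n := Nat.le_floor (by exact_mod_cast h1)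
      have hnR : (1:ℝ) ≤ (n:ℝ) := by exact_mod_cast hn1
      have hnpos : (0:ℝ) < (n:ℝ) := by linarith
      have hnle : (n:ℝ) ≤ (m*C) ^ α := Nat.floor_le (by positivity)
      have hfacpos : (0:ℝ) < (Nat.factorial n : ℝ) := by exact_mod_cast Nat.factorial_pos n
      have hsum := summable_pod ρ σ C m hρ hσ hρσ hC hm0
      -- value of the term at Vn n
      have hfV : (Nat.factorial (Vn n).card : ℝ) ^ σ * m ^ (Vn n).card
          * ∏ j ∈ Vn n, C * ((j:ℕ):ℝ) ^ (-ρ) = (m*C) ^ n * (Nat.factorial n : ℝ) ^ (σ-ρ) := by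
        rw [Vn_card]
        have hp : ∏ j ∈ Vn n, C * ((j:ℕ):ℝ) ^ (-ρ)
            = C ^ n * (Nat.factorial n : ℝ) ^ (-ρ) := by
          rw [Finset.prod_mul_distrib, Finset.prod_const, Vn_card, Vn_prod_rpow]
        rw [hp, show σ - ρ = σ + (-ρ) by ring, Real.rpow_add hfacpos, mul_pow]
        ring
      have hfpos : (0:ℝ) < (m*C) ^ n * (Nat.factorial n : ℝ) ^ (σ-ρ) := by positivity
      have hle : (m*C) ^ n * (Nat.factorial n : ℝ) ^ (σ-ρ) ≤ S m := by
        rw [← hfV]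
        exact Summable.le_tsum hsum (Vn n) (fun v _ => pod_nonneg ρ σ C m hC hm0 v)
      have hlogle : Real.log ((m*C) ^ n * (Nat.factorial n : ℝ) ^ (σ-ρ)) ≤ Real.log (S m) :=
        Real.log_le_log hfpos hle
      have hlogval : Real.log ((m*C) ^ n * (Nat.factorial n : ℝ) ^ (σ-ρ))
          = n * Real.log (m*C) + (σ-ρ) * Real.log (Nat.factorial n : ℝ) := by
        rw [Real.log_mul (by positivity) (by positivity), Real.log_pow,
          Real.log_rpow hfacpos]
      have hfact := log_fact_le n hn1
      have hlogn : (ρ-σ) * Real.log (n:ℝ) ≤ Real.log (m*C) := by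
        have h2 : Real.log (n:ℝ) ≤ Real.log ((m*C) ^ α) := Real.log_le_log hnpos hnle
        rw [Real.log_rpow hmC0] at h2
        have h3 := mul_le_mul_of_nonneg_left h2 (le_of_lt hεpos)
        calc (ρ-σ) * Real.log (n:ℝ) ≤ (ρ-σ) * (α * Real.log (m*C)) := h3
        _ = Real.log (m*C) := by
            rw [hαdef]; field_simp
      have hkey : (ρ-σ) * ((n:ℝ) - 1 - Real.log (n:ℝ))
          ≤ (n:ℝ) * Real.log (m*C) + (σ-ρ) * Real.log (Nat.factorial n : ℝ) := by
        have h4 := mul_le_mul_of_nonneg_left hlogn (le_of_lt hnpos)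
        nlinarith [hfact, mul_le_mul_of_nonneg_left hfact (le_of_lt hεpos)]
      have hmα : (0:ℝ) ≤ m ^ (-α) := Real.rpow_nonneg (le_of_lt hm0) _
      have hNn : N m = (n:ℝ) := by simp only [hNdef, hndef]
      calc φ m = m ^ (-α) * ((ρ-σ) * ((n:ℝ) - 1 - Real.log (n:ℝ))) := by
            simp only [hφdef, hNn]; ring
      _ ≤ m ^ (-α) * ((n:ℝ) * Real.log (m*C) + (σ-ρ) * Real.log (Nat.factorial n : ℝ)) :=
            mul_le_mul_of_nonneg_left hkey hmα
      _ = m ^ (-α) * Real.log ((m*C) ^ n * (Nat.factorial n : ℝ) ^ (σ-ρ)) := by rw [hlogval]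
      _ ≤ m ^ (-α) * Real.log (S m) := mul_le_mul_of_nonneg_left hlogle hmα
    -- eventual upper bound (coboundedness)
    have hub : ∀ᶠ m : ℝ in atTop, m ^ (-α) * Real.log (S m)
        ≤ Real.log 2 + (ρ-σ) * (4*C*Real.exp (1/(ρ-1))) ^ α := by
      filter_upwards [hev] with m hm
      obtain ⟨hm1, hmC⟩ := hm
      have hm0 : (0:ℝ) < m := by linarith
      have hsum := summable_pod ρ σ C m hρ hσ hρσ hC hm0
      have hS1 : (1:ℝ) ≤ S m := by
        have h0 := Summable.le_tsum hsum (∅ : Finset ℕ+) (fun v _ => pod_nonneg ρ σ C m hC hm0 v)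
        simpa using h0
      set r : ℝ := 2*m*C*Real.exp (1/(ρ-1)) with hrdef
      have hrpos : (0:ℝ) < r := by positivity
      have hSle : S m ≤ 2 * Real.exp ((ρ-σ) * (2*r) ^ α) := by
        calc S m ≤ ∑' n : ℕ, (Nat.factorial n : ℝ) ^ (σ-ρ) * r ^ n :=
              tsum_pod_le ρ σ C m hρ hσ hρσ hC hm0
        _ ≤ 2 * Real.exp ((ρ-σ) * (2*r) ^ (1/(ρ-σ))) :=
              b_tsum_le ρ σ r hρσ hrpos (b_summable ρ σ r hρσ hrpos)
        _ = 2 * Real.exp ((ρ-σ) * (2*r) ^ α) := by rw [hαdef]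
      have hlog : Real.log (S m) ≤ Real.log 2 + (ρ-σ) * (2*r) ^ α := by
        calc Real.log (S m) ≤ Real.log (2 * Real.exp ((ρ-σ) * (2*r) ^ α)) :=
              Real.log_le_log (by linarith) hSle
        _ = Real.log 2 + (ρ-σ) * (2*r) ^ α := by
              rw [Real.log_mul (by norm_num) (ne_of_gt (Real.exp_pos _)), Real.log_exp]
      have h2r : (2*r) ^ α = m ^ α * (4*C*Real.exp (1/(ρ-1))) ^ α := by
        rw [show 2*r = m * (4*C*Real.exp (1/(ρ-1))) by rw [hrdef]; ring,
          Real.mul_rpow (le_of_lt hm0) (by positivity)]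
      have hmα1 : m ^ (-α) ≤ 1 :=
        Real.rpow_le_one_of_one_le_of_nonpos hm1 (by linarith)
      have hmα : (0:ℝ) ≤ m ^ (-α) := Real.rpow_nonneg (le_of_lt hm0) _
      have hmm : m ^ (-α) * m ^ α = 1 := by
        rw [← Real.rpow_add hm0, neg_add_cancel, Real.rpow_zero]
      have hlogS0 : 0 ≤ Real.log (S m) := Real.log_nonneg hS1
      calc m ^ (-α) * Real.log (S m)
          ≤ m ^ (-α) * (Real.log 2 + (ρ-σ) * (2*r) ^ α) := mul_le_mul_of_nonneg_left hlog hmα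
      _ = m ^ (-α) * Real.log 2 + (ρ-σ) * (4*C*Real.exp (1/(ρ-1))) ^ α * (m ^ (-α) * m ^ α) := by
          rw [h2r]; ring
      _ ≤ Real.log 2 + (ρ-σ) * (4*C*Real.exp (1/(ρ-1))) ^ α := by
          rw [hmm]
          have hlog2 : (0:ℝ) ≤ Real.log 2 := Real.log_nonneg (by norm_num)
          nlinarith
    -- conclude
    have hcb : IsCoboundedUnder (· ≥ ·) atTop (fun m : ℝ => m ^ (-α) * Real.log (S m)) :=
      isCoboundedUnder_ge_of_eventually_le atTop hub
    have hbd : IsBoundedUnder (· ≥ ·) atTop φ := hφ.isBoundedUnder_ge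
    calc (ρ-σ) * C ^ α = liminf φ atTop := (hφ.liminf_eq).symm
    _ ≤ liminf (fun m : ℝ => m ^ (-α) * Real.log (S m)) atTop := liminf_le_liminf hlow hbd hcb
end

section
/- Let α ∈ ℕ and let (Υ_{j,k})_{j≥1, 1≤k≤α} be nonnegative reals with Σ_{j=1}^∞ Σ_{k=1}^α Υ_{j,k}^{1/k} < ∞. Then for every m > 0, the sum Σ_{v ⊆ ℕ finite} m^{|v|} Σ_{ν ∈ {1,...,α}^{v}} |ν|! ∏_{j∈v} Υ_{j,ν_j} is finite, where |ν| = Σ_{j∈v} ν_j. -/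
open Finset Function
open scoped ENNReal NNReal

namespace SPODAux

/-- Weight of a finite "graph" `A ⊆ ℕ+ × ℕ`. -/
noncomputable def wt (c : ℕ+ → ℝ≥0∞) (A : Finset (ℕ+ × ℕ)) : ℝ≥0∞ :=
  (Nat.factorial (∑ p ∈ A, p.2) : ℝ≥0∞) * ∏ p ∈ A, c p.1 ^ p.2

/-- `A` is the graph of a function with values in `[1, α]`. -/
def Good (α : ℕ) (A : Finset (ℕ+ × ℕ)) : Prop :=
  (∀ p ∈ A, p.2 ∈ Finset.Icc 1 α) ∧ Set.InjOn Prod.fst (A : Set (ℕ+ × ℕ))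

theorem Good.mono {α : ℕ} {A B : Finset (ℕ+ × ℕ)} (hBA : B ⊆ A) (hA : Good α A) :
    Good α B := ⟨fun p hp => hA.1 p (hBA hp), hA.2.mono (by exact_mod_cast hBA)⟩

/-- Fiber function of a graph. -/
noncomputable def nu (A : Finset (ℕ+ × ℕ)) (j : ℕ+) : ℕ :=
  ∑ p ∈ A.filter (fun p => p.1 = j), p.2

theorem nu_eq {α : ℕ} {A : Finset (ℕ+ × ℕ)} (hA : Good α A) {j : ℕ+} {k : ℕ}
    (hjk : (j, k) ∈ A) : nu A j = k := by
  have : A.filter (fun p => p.1 = j) = {(j, k)} := by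
    ext p
    simp only [mem_filter, mem_singleton]
    constructor
    · rintro ⟨hp, rfl⟩
      exact hA.2 hp hjk rfl
    · rintro rfl
      exact ⟨hjk, rfl⟩
  simp [nu, this]

theorem nu_ne_zero {α : ℕ} {A : Finset (ℕ+ × ℕ)} (hA : Good α A) {j : ℕ+}
    (h : nu A j ≠ 0) : (j, nu A j) ∈ A := by
  have hne : (A.filter (fun p => p.1 = j)).Nonempty := by
    by_contra hc
    rw [not_nonempty_iff_eq_empty] at hc
    simp [nu, hc] at h
  obtain ⟨p, hp⟩ := hne
  rw [mem_filter] at hp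
  obtain ⟨hpA, hpj⟩ := hp
  have : p = (j, p.2) := by ext <;> simp [hpj]
  rw [this] at hpA
  have := nu_eq hA hpA
  rw [this]
  exact hpA

theorem sum_nu {T : Finset ℕ+} {A : Finset (ℕ+ × ℕ)} (hT : ∀ p ∈ A, p.1 ∈ T) :
    ∑ i ∈ T, nu A i = ∑ p ∈ A, p.2 :=
  Finset.sum_fiberwise_of_maps_to hT _

theorem nu_mem_piAntidiag {T : Finset ℕ+} {A : Finset (ℕ+ × ℕ)} (hT : ∀ p ∈ A, p.1 ∈ T) :
    nu A ∈ Finset.piAntidiag T (∑ p ∈ A, p.2) := by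
  rw [Finset.mem_piAntidiag]
  refine ⟨sum_nu hT, fun i hi => ?_⟩
  have hne : (A.filter (fun p => p.1 = i)).Nonempty := by
    by_contra hc
    rw [not_nonempty_iff_eq_empty] at hc
    simp [nu, hc] at hi
  obtain ⟨p, hp⟩ := hne
  rw [mem_filter] at hp
  exact hp.2 ▸ hT p hp.1

theorem prod_pow_nu {c : ℕ+ → ℝ≥0∞} {T : Finset ℕ+} {A : Finset (ℕ+ × ℕ)}
    (hT : ∀ p ∈ A, p.1 ∈ T) :
    ∏ i ∈ T, c i ^ nu A i = ∏ p ∈ A, c p.1 ^ p.2 := by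
  rw [← Finset.prod_fiberwise_of_maps_to hT (fun p => c p.1 ^ p.2)]
  refine Finset.prod_congr rfl fun i _ => ?_
  rw [nu, ← Finset.prod_pow_eq_pow_sum]
  refine Finset.prod_congr rfl fun p hp => ?_
  rw [mem_filter] at hp
  rw [hp.2]

theorem wt_le {α : ℕ} {c : ℕ+ → ℝ≥0∞} {T : Finset ℕ+} {A : Finset (ℕ+ × ℕ)}
    (hA : Good α A) (hT : ∀ p ∈ A, p.1 ∈ T) :
    wt c A ≤ (Nat.multinomial T (nu A) : ℝ≥0∞) *
      ∏ i ∈ T, ((α.factorial : ℝ≥0∞) * c i) ^ nu A i := by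
  have hfact : ((∑ p ∈ A, p.2).factorial : ℝ≥0∞) =
      (Nat.multinomial T (nu A) : ℝ≥0∞) * (∏ i ∈ T, (nu A i).factorial : ℕ) := by
    rw [← Nat.cast_mul, mul_comm (Nat.multinomial T (nu A)), Nat.multinomial_spec, sum_nu hT]
  rw [wt, hfact, mul_assoc]
  refine mul_le_mul_right ?_ _
  rw [← prod_pow_nu hT, Nat.cast_prod, ← Finset.prod_mul_distrib]
  refine Finset.prod_le_prod' fun i hi => ?_
  rw [mul_pow]
  refine mul_le_mul' ?_ le_rfl
  rcases eq_or_ne (nu A i) 0 with h0 | h0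
  · simp [h0]
  · have hmem := nu_ne_zero (α := α) hA h0
    have hle : nu A i ≤ α := by
      have := hA.1 _ hmem
      rw [Finset.mem_Icc] at this
      exact this.2
    calc ((nu A i).factorial : ℝ≥0∞) ≤ (α.factorial : ℝ≥0∞) := by
          exact_mod_cast Nat.factorial_le hle
      _ ≤ (α.factorial : ℝ≥0∞) ^ nu A i := le_self_pow₀ (by exact_mod_cast α.factorial_pos) h0

/-- `nu` determines good graphs. -/
theorem nu_injOn {α : ℕ} {A B : Finset (ℕ+ × ℕ)} (hA : Good α A) (hB : Good α B)
    (h : nu A = nu B) : A = B := by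
  have key : ∀ (C D : Finset (ℕ+ × ℕ)), Good α C → Good α D → nu C = nu D → C ⊆ D := by
    intro C D hC hD hCD p hp
    have h2 : nu C p.1 = p.2 := nu_eq hC (by simpa using hp)
    have hp2 : p.2 ≠ 0 := by
      have := hC.1 p hp
      rw [Finset.mem_Icc] at this
      omega
    have h3 : nu D p.1 = p.2 := by rw [← hCD]; exact h2
    have hmem := nu_ne_zero hD (j := p.1) (by rw [h3]; exact hp2)
    rw [h3] at hmem
    simpa using hmem
  exact le_antisymm (key A B hA hB h) (key B A hB hA h.symm)

/-- Tail bound: partial sums of good graph weights with keys avoiding `F` are bounded by a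
geometric series. -/
theorem sum_tail_le (α : ℕ) (c : ℕ+ → ℝ≥0∞) (F : Finset ℕ+)
    (s : Finset (Finset (ℕ+ × ℕ))) :
    ∑ A ∈ s, Set.indicator {A : Finset (ℕ+ × ℕ) | Good α A ∧ ∀ p ∈ A, p.1 ∉ F} (wt c) A ≤
      ∑' n : ℕ, (∑' j : ℕ+, Set.indicator {j : ℕ+ | j ∉ F}
        (fun j => (α.factorial : ℝ≥0∞) * c j) j) ^ n := by
  classical
  set d : ℕ+ → ℝ≥0∞ := fun j => (α.factorial : ℝ≥0∞) * c j with hd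
  set σ : ℝ≥0∞ := ∑' j : ℕ+, Set.indicator {j : ℕ+ | j ∉ F} d j with hσ
  set s' := s.filter (fun A => Good α A ∧ ∀ p ∈ A, p.1 ∉ F) with hs'
  have hrw : ∀ A : Finset (ℕ+ × ℕ),
      Set.indicator {A : Finset (ℕ+ × ℕ) | Good α A ∧ ∀ p ∈ A, p.1 ∉ F} (wt c) A =
        if Good α A ∧ ∀ p ∈ A, p.1 ∉ F then wt c A else 0 := fun A => by
    rw [Set.indicator_apply]; simp only [Set.mem_setOf_eq]
  rw [Finset.sum_congr rfl (fun A _ => hrw A), ← Finset.sum_filter, ← hs']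
  have hs'' : ∀ A ∈ s', Good α A ∧ ∀ p ∈ A, p.1 ∉ F := by
    intro A hA; rw [hs', mem_filter] at hA; exact hA.2
  set T := s'.biUnion (fun A => A.image Prod.fst) with hT
  have hkeys : ∀ A ∈ s', ∀ p ∈ A, p.1 ∈ T := by
    intro A hA p hp
    exact Finset.mem_biUnion.2 ⟨A, hA, Finset.mem_image_of_mem _ hp⟩
  have hTF : ∀ i ∈ T, i ∉ F := by
    intro i hi
    obtain ⟨A, hA, hiA⟩ := Finset.mem_biUnion.1 hi
    obtain ⟨p, hp, rfl⟩ := Finset.mem_image.1 hiA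
    exact (hs'' A hA).2 p hp
  have hsub : ∑ i ∈ T, d i ≤ σ := by
    calc ∑ i ∈ T, d i = ∑ i ∈ T, Set.indicator {j : ℕ+ | j ∉ F} d i :=
          Finset.sum_congr rfl fun i hi =>
            (Set.indicator_of_mem (show i ∈ {j : ℕ+ | j ∉ F} from hTF i hi) d).symm
      _ ≤ σ := ENNReal.sum_le_tsum T
  have hmaps : ∀ A ∈ s', (∑ p ∈ A, p.2) ∈ Finset.range (α * T.card + 1) := by
    intro A hA
    rw [Finset.mem_range, Nat.lt_succ_iff]
    have h1 : ∑ p ∈ A, p.2 ≤ ∑ _p ∈ A, α := by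
      refine Finset.sum_le_sum fun p hp => ?_
      have := (hs'' A hA).1.1 p hp
      rw [Finset.mem_Icc] at this; exact this.2
    have h2 : A.card ≤ T.card := by
      have h3 : (A.image Prod.fst).card = A.card :=
        Finset.card_image_of_injOn (hs'' A hA).1.2
      have h4 : A.image Prod.fst ⊆ T := Finset.subset_biUnion_of_mem _ hA
      calc A.card = (A.image Prod.fst).card := h3.symm
        _ ≤ T.card := Finset.card_le_card h4
    calc ∑ p ∈ A, p.2 ≤ ∑ _p ∈ A, α := h1
      _ = A.card * α := by rw [Finset.sum_const, smul_eq_mul]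
      _ ≤ T.card * α := Nat.mul_le_mul_right _ h2
      _ = α * T.card := Nat.mul_comm _ _
  rw [← Finset.sum_fiberwise_of_maps_to hmaps (wt c)]
  refine le_trans (Finset.sum_le_sum fun n _ => ?_) (ENNReal.sum_le_tsum _)
  set t := s'.filter (fun A => ∑ p ∈ A, p.2 = n) with ht
  have htmem : ∀ A ∈ t, Good α A ∧ (∀ p ∈ A, p.1 ∈ T) ∧ ∑ p ∈ A, p.2 = n := by
    intro A hA
    rw [ht, mem_filter] at hA
    exact ⟨(hs'' A hA.1).1, hkeys A hA.1, hA.2⟩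
  calc ∑ A ∈ t, wt c A
      ≤ ∑ A ∈ t, (Nat.multinomial T (nu A) : ℝ≥0∞) * ∏ i ∈ T, d i ^ nu A i :=
        Finset.sum_le_sum fun A hA => wt_le (htmem A hA).1 (htmem A hA).2.1
    _ = ∑ k ∈ t.image nu, (Nat.multinomial T k : ℝ≥0∞) * ∏ i ∈ T, d i ^ k i := by
        rw [Finset.sum_image (fun A hA B hB hAB =>
          nu_injOn (htmem A hA).1 (htmem B hB).1 hAB)]
    _ ≤ ∑ k ∈ Finset.piAntidiag T n, (Nat.multinomial T k : ℝ≥0∞) * ∏ i ∈ T, d i ^ k i := by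
        refine Finset.sum_le_sum_of_subset fun k hk => ?_
        obtain ⟨A, hA, rfl⟩ := Finset.mem_image.1 hk
        have := nu_mem_piAntidiag (htmem A hA).2.1
        rwa [(htmem A hA).2.2] at this
    _ = (∑ i ∈ T, d i) ^ n := (Finset.sum_pow_eq_sum_piAntidiag T d n).symm
    _ ≤ σ ^ n := by gcongr

/-- Splitting a good graph at a finite key set `F`. -/
theorem gw_split (α : ℕ) (c₀ : ℕ+ → ℝ≥0∞) (F : Finset ℕ+) (A : Finset (ℕ+ × ℕ)) :
    Set.indicator {A : Finset (ℕ+ × ℕ) | Good α A} (wt c₀) A ≤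
      Set.indicator {A : Finset (ℕ+ × ℕ) | Good α A ∧ ∀ p ∈ A, p.1 ∈ F}
          (wt (fun j => 2 * c₀ j)) (A.filter fun p => p.1 ∈ F) *
        Set.indicator {A : Finset (ℕ+ × ℕ) | Good α A ∧ ∀ p ∈ A, p.1 ∉ F}
          (wt (fun j => 2 * c₀ j)) (A.filter fun p => p.1 ∉ F) := by
  classical
  by_cases hA : Good α A
  · set c : ℕ+ → ℝ≥0∞ := fun j => 2 * c₀ j with hc
    set A₁ := A.filter (fun p => p.1 ∈ F) with hA₁
    set A₂ := A.filter (fun p => p.1 ∉ F) with hA₂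
    rw [Set.indicator_of_mem (show A ∈ {A : Finset (ℕ+ × ℕ) | Good α A} from hA),
      Set.indicator_of_mem, Set.indicator_of_mem]
    rotate_left
    · exact ⟨hA.mono (Finset.filter_subset _ _), fun p hp => (Finset.mem_filter.1 hp).2⟩
    · exact ⟨hA.mono (Finset.filter_subset _ _), fun p hp => (Finset.mem_filter.1 hp).2⟩
    set n₁ := ∑ p ∈ A₁, p.2 with hn₁
    set n₂ := ∑ p ∈ A₂, p.2 with hn₂
    have hsum : ∑ p ∈ A, p.2 = n₁ + n₂ :=
      (Finset.sum_filter_add_sum_filter_not A (fun p => p.1 ∈ F) _).symm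
    have hfact : ((n₁ + n₂).factorial : ℝ≥0∞) ≤
        2 ^ (n₁ + n₂) * ((n₁.factorial : ℝ≥0∞) * n₂.factorial) := by
      have h1 : (n₁ + n₂).choose n₂ * n₁.factorial * n₂.factorial = (n₁ + n₂).factorial :=
        Nat.add_choose_mul_factorial_mul_factorial n₁ n₂
      have h2 : (n₁ + n₂).choose n₂ ≤ 2 ^ (n₁ + n₂) := by
        calc (n₁ + n₂).choose n₂ ≤ ∑ m ∈ Finset.range (n₁ + n₂ + 1), (n₁ + n₂).choose m :=
              Finset.single_le_sum (fun _ _ => Nat.zero_le _)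
                (Finset.mem_range.2 (by omega))
          _ = 2 ^ (n₁ + n₂) := Nat.sum_range_choose _
      have h3 : (n₁ + n₂).factorial ≤ 2 ^ (n₁ + n₂) * (n₁.factorial * n₂.factorial) := by
        rw [← h1]; rw [Nat.mul_assoc]
        exact Nat.mul_le_mul_right _ h2
      exact_mod_cast h3
    have hprod2 : ∏ p ∈ A, c p.1 ^ p.2 = 2 ^ (n₁ + n₂) * ∏ p ∈ A, c₀ p.1 ^ p.2 := by
      simp only [hc, mul_pow]
      rw [Finset.prod_mul_distrib, Finset.prod_pow_eq_pow_sum, hsum]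
    have hprod : ∏ p ∈ A, c p.1 ^ p.2 =
        (∏ p ∈ A₁, c p.1 ^ p.2) * ∏ p ∈ A₂, c p.1 ^ p.2 :=
      (Finset.prod_filter_mul_prod_filter_not A _ _).symm
    calc wt c₀ A = ((n₁ + n₂).factorial : ℝ≥0∞) * ∏ p ∈ A, c₀ p.1 ^ p.2 := by
          rw [wt, hsum]
      _ ≤ (2 ^ (n₁ + n₂) * ((n₁.factorial : ℝ≥0∞) * n₂.factorial)) * ∏ p ∈ A, c₀ p.1 ^ p.2 :=
          mul_le_mul_left hfact _
      _ = ((n₁.factorial : ℝ≥0∞) * n₂.factorial) * (2 ^ (n₁ + n₂) * ∏ p ∈ A, c₀ p.1 ^ p.2) := by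
          ring
      _ = ((n₁.factorial : ℝ≥0∞) * n₂.factorial) *
            ((∏ p ∈ A₁, c p.1 ^ p.2) * ∏ p ∈ A₂, c p.1 ^ p.2) := by
          rw [← hprod2, hprod]
      _ = wt c A₁ * wt c A₂ := by rw [wt, wt]; ring
  · rw [Set.indicator_of_notMem (show A ∉ {A : Finset (ℕ+ × ℕ) | Good α A} from hA)]
    exact zero_le

/-- The head sum is finite. -/
theorem tsum_head_ne_top (α : ℕ) (c : ℕ+ → ℝ≥0∞) (hc : ∀ j, c j ≠ ⊤) (F : Finset ℕ+) :
    ∑' A : Finset (ℕ+ × ℕ),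
      Set.indicator {A : Finset (ℕ+ × ℕ) | Good α A ∧ ∀ p ∈ A, p.1 ∈ F} (wt c) A ≠ ⊤ := by
  classical
  rw [tsum_eq_sum (s := (F ×ˢ Finset.Icc 1 α).powerset)
    (fun A hA => Set.indicator_of_notMem (fun hmem => hA ?_) _)]
  · refine (ENNReal.sum_lt_top.2 fun A _ => ?_).ne
    refine lt_of_le_of_lt (Set.indicator_le_self _ _ A) ?_
    rw [wt]
    refine ENNReal.mul_lt_top (ENNReal.natCast_lt_top _) ?_
    exact ENNReal.prod_lt_top fun p _ => ENNReal.pow_lt_top (hc p.1).lt_top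
  · rw [Finset.mem_powerset]
    intro p hp
    exact Finset.mem_product.2 ⟨hmem.2 p hp, hmem.1.1 p hp⟩

/-- The encoding of a pair `(v, ν)` as a graph. -/
noncomputable def enc (σ : Σ v : Finset ℕ+, ∀ a ∈ v, ℕ) : Finset (ℕ+ × ℕ) :=
  σ.1.attach.image (fun j => (j.1, σ.2 j.1 j.2))

theorem enc_injective : Injective enc := by
  rintro ⟨v, ν⟩ ⟨w, μ⟩ h
  have hv : v = w := by
    have h1 : ∀ (x : Finset ℕ+) (ρ : ∀ a ∈ x, ℕ), (enc ⟨x, ρ⟩).image Prod.fst = x := by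
      intro x ρ
      rw [enc, Finset.image_image]
      exact Finset.attach_image_val
    rw [← h1 v ν, ← h1 w μ, h]
  subst hv
  have hν : ν = μ := by
    funext a ha
    have hmem : (a, ν a ha) ∈ enc ⟨v, μ⟩ := by
      rw [← h, enc]
      exact Finset.mem_image.2 ⟨⟨a, ha⟩, Finset.mem_attach _ _, rfl⟩
    rw [enc] at hmem
    obtain ⟨j, _, hj⟩ := Finset.mem_image.1 hmem
    have hja : j.1 = a := congrArg Prod.fst hj
    have := congrArg Prod.snd hj
    simp only at this
    subst hja
    simpa using this.symm
  rw [hν]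

end SPODAux

open SPODAux in
theorem spod_summable (α : ℕ) (hα : 1 ≤ α) (Υ : ℕ+ → ℕ → ℝ)
    (hΥ : ∀ j k, 0 ≤ Υ j k)
    (hsum : Summable (fun j : ℕ+ => ∑ k ∈ Finset.Icc 1 α, Υ j k ^ ((1 : ℝ) / (k : ℝ))))
    (m : ℝ) (hm : 0 < m) :
    Summable (fun v : Finset ℕ+ =>
      m ^ v.card *
        ∑ ν ∈ v.pi (fun _ => Finset.Icc 1 α),
          (Nat.factorial (∑ j ∈ v.attach, ν j.1 j.2) : ℝ) * ∏ j ∈ v.attach, Υ j.1 (ν j.1 j.2)) := by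
  classical
  set f : Finset ℕ+ → ℝ := fun v =>
    m ^ v.card * ∑ ν ∈ v.pi (fun _ => Finset.Icc 1 α),
      (Nat.factorial (∑ j ∈ v.attach, ν j.1 j.2) : ℝ) *
        ∏ j ∈ v.attach, Υ j.1 (ν j.1 j.2) with hf
  have hf0 : ∀ v, 0 ≤ f v := by
    intro v
    refine mul_nonneg (pow_nonneg hm.le _) (Finset.sum_nonneg fun ν _ => ?_)
    exact mul_nonneg (Nat.cast_nonneg _) (Finset.prod_nonneg fun j _ => hΥ _ _)
  -- ENNReal versions of the data
  set u : ℕ+ → ℕ → ℝ≥0∞ := fun j k => ENNReal.ofReal (Υ j k) with hu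
  set b : ℕ+ → ℝ≥0∞ := fun j => ∑ k ∈ Finset.Icc 1 α, u j k ^ ((1 : ℝ) / (k : ℝ)) with hb
  have hb_eq : ∀ j, b j = ENNReal.ofReal (∑ k ∈ Finset.Icc 1 α, Υ j k ^ ((1 : ℝ) / (k : ℝ))) := by
    intro j
    rw [ENNReal.ofReal_sum_of_nonneg fun k _ => Real.rpow_nonneg (hΥ j k) _]
    refine Finset.sum_congr rfl fun k hk => ?_
    rw [ENNReal.ofReal_rpow_of_nonneg (hΥ j k) (by positivity)]
  have hbsum : ∑' j, b j ≠ ⊤ := by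
    have : (fun j : ℕ+ => b j) = fun j =>
        ENNReal.ofReal (∑ k ∈ Finset.Icc 1 α, Υ j k ^ ((1 : ℝ) / (k : ℝ))) := funext hb_eq
    rw [this, ← ENNReal.ofReal_tsum_of_nonneg
      (fun j => Finset.sum_nonneg fun k _ => Real.rpow_nonneg (hΥ j k) _) hsum]
    exact ENNReal.ofReal_ne_top
  have hub : ∀ (j : ℕ+) (k : ℕ), k ∈ Finset.Icc 1 α → u j k ≤ b j ^ k := by
    intro j k hk
    rw [Finset.mem_Icc] at hk
    have hk0 : (k : ℝ) ≠ 0 := by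
      exact_mod_cast Nat.one_le_iff_ne_zero.1 hk.1
    have h1 : u j k = (u j k ^ ((1 : ℝ) / (k : ℝ))) ^ (k : ℕ) := by
      rw [← ENNReal.rpow_natCast (u j k ^ ((1 : ℝ) / (k : ℝ))) k, ← ENNReal.rpow_mul,
        one_div_mul_cancel hk0, ENNReal.rpow_one]
    rw [h1]
    refine pow_le_pow_left' ?_ k
    exact Finset.single_le_sum (f := fun k => u j k ^ ((1 : ℝ) / (k : ℝ)))
      (fun _ _ => zero_le) (Finset.mem_Icc.2 hk)
  set M : ℝ≥0∞ := max (ENNReal.ofReal m) 1 with hM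
  have hM1 : 1 ≤ M := le_max_right _ _
  have hMm : ENNReal.ofReal m ≤ M := le_max_left _ _
  have hMtop : M ≠ ⊤ := by
    rw [hM]
    exact (max_lt ENNReal.ofReal_lt_top ENNReal.one_lt_top).ne
  set c₀ : ℕ+ → ℝ≥0∞ := fun j => M * b j with hc₀
  set c : ℕ+ → ℝ≥0∞ := fun j => 2 * c₀ j with hc
  set d : ℕ+ → ℝ≥0∞ := fun j => (α.factorial : ℝ≥0∞) * c j with hd
  have hbtop : ∀ j, b j ≠ ⊤ := by
    intro j
    exact ENNReal.ne_top_of_tsum_ne_top hbsum j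
  have hctop : ∀ j, c j ≠ ⊤ := by
    intro j
    simp only [hc, hc₀]
    exact ENNReal.mul_ne_top ENNReal.ofNat_ne_top (ENNReal.mul_ne_top hMtop (hbtop j))
  have hdsum : ∑' j, d j ≠ ⊤ := by
    have heq : (fun j : ℕ+ => d j) =
        fun j => ((α.factorial : ℝ≥0∞) * (2 * M)) * b j := by
      funext j; simp only [hd, hc, hc₀]; ring
    rw [heq, ENNReal.tsum_mul_left]
    exact ENNReal.mul_ne_top
      (ENNReal.mul_ne_top (ENNReal.natCast_ne_top _)
        (ENNReal.mul_ne_top ENNReal.ofNat_ne_top hMtop)) hbsum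
  -- choose the finite head set F
  obtain ⟨F, hF⟩ : ∃ F : Finset ℕ+, ∑' j : {x : ℕ+ // x ∉ F}, d j < 1 :=
    ((ENNReal.tendsto_tsum_compl_atTop_zero hdsum).eventually_lt_const zero_lt_one).exists
  set σ : ℝ≥0∞ := ∑' j : ℕ+, Set.indicator {j : ℕ+ | j ∉ F} d j with hσdef
  have hσ : σ < 1 := by
    rw [hσdef, ← tsum_subtype {j : ℕ+ | j ∉ F} d]
    exact hF
  set K : ℝ≥0∞ := ∑' n : ℕ, σ ^ n with hK
  have hKtop : K ≠ ⊤ := by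
    rw [hK, ENNReal.tsum_geometric]
    rw [Ne, ENNReal.inv_eq_top]
    intro h0
    rw [tsub_eq_zero_iff_le] at h0
    exact absurd h0 (not_le.2 hσ)
  -- indicator sets
  set Sgw : Set (Finset (ℕ+ × ℕ)) := {A | Good α A} with hSgw
  set Shd : Set (Finset (ℕ+ × ℕ)) := {A | Good α A ∧ ∀ p ∈ A, p.1 ∈ F} with hShd
  set Stl : Set (Finset (ℕ+ × ℕ)) := {A | Good α A ∧ ∀ p ∈ A, p.1 ∉ F} with hStl
  -- main estimate in ℝ≥0∞
  have hmain : ∑' v : Finset ℕ+, ENNReal.ofReal (f v) ≠ ⊤ := by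
    -- step 1: pointwise bound by a sum of graph weights
    have hstep1 : ∀ v : Finset ℕ+, ENNReal.ofReal (f v) ≤
        ∑ ν ∈ v.pi (fun _ => Finset.Icc 1 α),
          Set.indicator Sgw (wt c₀) (enc ⟨v, fun a ha => ν a ha⟩) := by
      intro v
      have hofreal : ENNReal.ofReal (f v) =
          ∑ ν ∈ v.pi (fun _ => Finset.Icc 1 α),
            ENNReal.ofReal m ^ v.card *
              (((∑ j ∈ v.attach, ν j.1 j.2).factorial : ℝ≥0∞) *
                ∏ j ∈ v.attach, u j.1 (ν j.1 j.2)) := by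
        rw [hf, ENNReal.ofReal_mul (pow_nonneg hm.le _), ENNReal.ofReal_pow hm.le,
          ENNReal.ofReal_sum_of_nonneg
            (fun ν _ => mul_nonneg (Nat.cast_nonneg _) (Finset.prod_nonneg fun j _ => hΥ _ _)),
          Finset.mul_sum]
        refine Finset.sum_congr rfl fun ν _ => ?_
        rw [ENNReal.ofReal_mul (Nat.cast_nonneg _), ENNReal.ofReal_natCast,
          ENNReal.ofReal_prod_of_nonneg fun j _ => hΥ _ _]
      rw [hofreal]
      refine Finset.sum_le_sum fun ν hν => ?_
      -- the graph is good, and the term is bounded by its weight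
      have hνIcc : ∀ (a : ℕ+) (ha : a ∈ v), ν a ha ∈ Finset.Icc 1 α :=
        Finset.mem_pi.1 hν
      set A := enc ⟨v, fun a ha => ν a ha⟩ with hA
      have hGood : Good α A := by
        constructor
        · intro p hp
          obtain ⟨j, _, rfl⟩ := Finset.mem_image.1 hp
          exact hνIcc j.1 j.2
        · intro p hp q hq hpq
          rw [hA, enc] at hp hq
          simp only [Finset.coe_image, Set.mem_image] at hp hq
          obtain ⟨j, _, rfl⟩ := hp
          obtain ⟨i, _, rfl⟩ := hq
          simp only at hpq
          have : i = j := Subtype.ext hpq.symm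
          rw [this]
      have hmapinj : ∀ x ∈ v.attach, ∀ y ∈ v.attach,
          (fun (j : {x // x ∈ v}) => (j.1, ν j.1 j.2)) x =
            (fun (j : {x // x ∈ v}) => (j.1, ν j.1 j.2)) y → x = y := by
        intro x _ y _ hxy
        exact Subtype.ext (congrArg Prod.fst hxy)
      have hsumA : ∑ p ∈ A, p.2 = ∑ j ∈ v.attach, ν j.1 j.2 := by
        rw [hA, enc, Finset.sum_image hmapinj]
      have hprodA : ∏ p ∈ A, c₀ p.1 ^ p.2 = ∏ j ∈ v.attach, c₀ j.1 ^ ν j.1 j.2 := by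
        rw [hA, enc, Finset.prod_image hmapinj]
      rw [Set.indicator_of_mem (show A ∈ Sgw from hGood), wt, hsumA, hprodA]
      rw [show ENNReal.ofReal m ^ v.card *
            (((∑ j ∈ v.attach, ν j.1 j.2).factorial : ℝ≥0∞) *
              ∏ j ∈ v.attach, u j.1 (ν j.1 j.2)) =
          ((∑ j ∈ v.attach, ν j.1 j.2).factorial : ℝ≥0∞) *
            (ENNReal.ofReal m ^ v.card * ∏ j ∈ v.attach, u j.1 (ν j.1 j.2)) by ring]
      refine mul_le_mul_right ?_ _
      have hcard : ENNReal.ofReal m ^ v.card = ∏ _j ∈ v.attach, ENNReal.ofReal m := by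
        rw [Finset.prod_const, Finset.card_attach]
      rw [hcard, ← Finset.prod_mul_distrib]
      refine Finset.prod_le_prod' fun j _ => ?_
      have hj := hνIcc j.1 j.2
      rw [Finset.mem_Icc] at hj
      have hne : ν j.1 j.2 ≠ 0 := by omega
      calc ENNReal.ofReal m * u j.1 (ν j.1 j.2)
          ≤ M ^ ν j.1 j.2 * b j.1 ^ ν j.1 j.2 := by
            refine mul_le_mul' (hMm.trans (le_self_pow₀ hM1 hne)) ?_
            exact hub j.1 (ν j.1 j.2) (Finset.mem_Icc.2 hj)
        _ = c₀ j.1 ^ ν j.1 j.2 := by rw [hc₀, mul_pow]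
    -- step 2: compare with the tsum over all graphs
    have hstep2 : ∑' v : Finset ℕ+, ENNReal.ofReal (f v) ≤
        ∑' A : Finset (ℕ+ × ℕ), Set.indicator Sgw (wt c₀) A := by
      refine le_trans (ENNReal.tsum_le_tsum hstep1) ?_
      have heq : ∀ v : Finset ℕ+,
          ∑ ν ∈ v.pi (fun _ => Finset.Icc 1 α),
            Set.indicator Sgw (wt c₀) (enc ⟨v, fun a ha => ν a ha⟩) =
          ∑' ν : ∀ a ∈ v, ℕ,
            Set.indicator (↑(v.pi (fun _ => Finset.Icc 1 α)) : Set (∀ a ∈ v, ℕ))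
              (fun ρ => Set.indicator Sgw (wt c₀) (enc ⟨v, ρ⟩)) ν := by
        intro v
        rw [tsum_eq_sum (s := v.pi (fun _ => Finset.Icc 1 α))
          (fun ν hν => Set.indicator_of_notMem (fun hmem => hν (Finset.mem_coe.1 hmem)) _)]
        exact Finset.sum_congr rfl fun ν hν =>
          (Set.indicator_of_mem (Finset.mem_coe.2 hν)
            (fun ρ => Set.indicator Sgw (wt c₀) (enc ⟨v, ρ⟩))).symm
      calc ∑' v : Finset ℕ+, ∑ ν ∈ v.pi (fun _ => Finset.Icc 1 α),
              Set.indicator Sgw (wt c₀) (enc ⟨v, fun a ha => ν a ha⟩)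
          = ∑' (v : Finset ℕ+) (ν : ∀ a ∈ v, ℕ),
              Set.indicator (↑(v.pi (fun _ => Finset.Icc 1 α)) : Set (∀ a ∈ v, ℕ))
                (fun ρ => Set.indicator Sgw (wt c₀) (enc ⟨v, ρ⟩)) ν := by
            exact tsum_congr heq
        _ = ∑' σ : Σ v : Finset ℕ+, ∀ a ∈ v, ℕ,
              Set.indicator (↑(σ.1.pi (fun _ => Finset.Icc 1 α)) : Set (∀ a ∈ σ.1, ℕ))
                (fun ρ => Set.indicator Sgw (wt c₀) (enc ⟨σ.1, ρ⟩)) σ.2 :=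
            (ENNReal.tsum_sigma' (fun σ : Σ v : Finset ℕ+, ∀ a ∈ v, ℕ =>
              Set.indicator (↑(σ.1.pi (fun _ => Finset.Icc 1 α)) : Set (∀ a ∈ σ.1, ℕ))
                (fun ρ => Set.indicator Sgw (wt c₀) (enc ⟨σ.1, ρ⟩)) σ.2)).symm
        _ ≤ ∑' σ : Σ v : Finset ℕ+, ∀ a ∈ v, ℕ,
              Set.indicator Sgw (wt c₀) (enc σ) := by
            refine ENNReal.tsum_le_tsum fun σ => ?_
            exact le_trans (Set.indicator_le_self _ _ _) le_rfl
        _ ≤ ∑' A : Finset (ℕ+ × ℕ), Set.indicator Sgw (wt c₀) A :=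
            ENNReal.tsum_comp_le_tsum_of_injective enc_injective _
    -- step 3: split into head and tail
    have hstep3 : ∑' A : Finset (ℕ+ × ℕ), Set.indicator Sgw (wt c₀) A ≤
        (∑' A : Finset (ℕ+ × ℕ), Set.indicator Shd (wt c) A) *
          ∑' A : Finset (ℕ+ × ℕ), Set.indicator Stl (wt c) A := by
      have hsplit : ∀ A : Finset (ℕ+ × ℕ),
          Set.indicator Sgw (wt c₀) A ≤
            Set.indicator Shd (wt c) (A.filter fun p => p.1 ∈ F) *
              Set.indicator Stl (wt c) (A.filter fun p => p.1 ∉ F) := by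
        intro A
        have := gw_split α c₀ F A
        simpa [hc, hSgw, hShd, hStl] using this
      refine le_trans (ENNReal.tsum_le_tsum hsplit) ?_
      have hinj : Injective (fun A : Finset (ℕ+ × ℕ) =>
          ((A.filter fun p => p.1 ∈ F), (A.filter fun p => p.1 ∉ F))) := by
        intro A B hAB
        have h1 := congrArg Prod.fst hAB
        have h2 := congrArg Prod.snd hAB
        simp only at h1 h2
        rw [← Finset.filter_union_filter_not_eq (fun p => p.1 ∈ F) A,
          ← Finset.filter_union_filter_not_eq (fun p => p.1 ∈ F) B, h1, h2]
      calc ∑' A : Finset (ℕ+ × ℕ),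
              Set.indicator Shd (wt c) (A.filter fun p => p.1 ∈ F) *
                Set.indicator Stl (wt c) (A.filter fun p => p.1 ∉ F)
          ≤ ∑' p : Finset (ℕ+ × ℕ) × Finset (ℕ+ × ℕ),
              Set.indicator Shd (wt c) p.1 * Set.indicator Stl (wt c) p.2 :=
            ENNReal.tsum_comp_le_tsum_of_injective hinj
              (fun p => Set.indicator Shd (wt c) p.1 * Set.indicator Stl (wt c) p.2)
        _ = (∑' A : Finset (ℕ+ × ℕ), Set.indicator Shd (wt c) A) *
              ∑' A : Finset (ℕ+ × ℕ), Set.indicator Stl (wt c) A := by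
            rw [ENNReal.tsum_prod']
            simp_rw [ENNReal.tsum_mul_left]
            rw [ENNReal.tsum_mul_right]
    -- tail bound
    have htail : ∑' A : Finset (ℕ+ × ℕ), Set.indicator Stl (wt c) A ≤ K := by
      rw [ENNReal.tsum_eq_iSup_sum]
      refine iSup_le fun s => ?_
      have := sum_tail_le α c F s
      simpa [hStl, hd, hK, hσdef] using this
    -- head bound
    have hhead : ∑' A : Finset (ℕ+ × ℕ), Set.indicator Shd (wt c) A ≠ ⊤ :=
      tsum_head_ne_top α c hctop F
    refine ne_top_of_le_ne_top ?_ (hstep2.trans hstep3)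
    exact ENNReal.mul_ne_top hhead (ne_top_of_le_ne_top hKtop htail)
  -- conclude summability
  have := ENNReal.summable_toReal hmain
  refine this.congr fun v => ?_
  exact ENNReal.toReal_ofReal (hf0 v)
end
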